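/- arXiv:0705.2995 — 6 statements merged into one kernel-verified Lean document; each statement's English description precedes it below -/
import Mathlib

section
/- Let Z be a countable set of complex numbers with coefficients c_z and radii d_z > 0, the disks B(z, d_z) pairwise disjoint, with only finitely many z ∈ Z in any bounded disk, and suppose Σ_{z∈Z} |c_z|/d_z < ∞. Then G'(s) := Σ_{z∈Z, |s−z|≥d_z} |c_z|/|s − z| converges uniformly to 0 as |s| → ∞; i.e., for every ε > 0 there is R such that G'(s) < ε whenever |s| ≥ R. -/
open Metric

theorem partial_fraction_vanishing_at_infinity
    (Z : Set ℂ) (hZc : Z.Countable)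
    (hZfin : ∀ r : ℝ, 0 ≤ r → (Z ∩ closedBall 0 r).Finite)
    (c : ℂ → ℂ) (d : ℂ → ℝ)
    (hc : ∀ z ∈ Z, c z ≠ 0)
    (hd : ∀ z ∈ Z, 0 < d z)
    (hdisj : ∀ z ∈ Z, ∀ z' ∈ Z, z ≠ z' →
      Disjoint (closedBall z (d z)) (closedBall z' (d z')))
    (hsum : Summable fun z : Z => ‖c z.1‖ / d z.1) :
    ∀ ε > 0, ∃ R : ℝ, ∀ s : ℂ, R ≤ ‖s‖ →
      (∑' z : Z, if d z.1 ≤ ‖s - z.1‖ then ‖c z.1‖ / ‖s - z.1‖ else 0) < ε := by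
  intro ε hε
  set g : Z → ℝ := fun z => ‖c z.1‖ / d z.1 with hgdef
  have hg0 : ∀ z : Z, 0 ≤ g z := fun z => div_nonneg (norm_nonneg _) (hd z.1 z.2).le
  set f : ℂ → Z → ℝ :=
    fun s z => if d z.1 ≤ ‖s - z.1‖ then ‖c z.1‖ / ‖s - z.1‖ else 0 with hfdef
  have hf0 : ∀ s : ℂ, ∀ z : Z, 0 ≤ f s z := by
    intro s z
    simp only [hfdef]
    split_ifs with h
    · exact div_nonneg (norm_nonneg _) (norm_nonneg _)
    · exact le_refl 0
  have hfle : ∀ s : ℂ, ∀ z : Z, f s z ≤ g z := by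
    intro s z
    simp only [hfdef, hgdef]
    split_ifs with h
    · exact div_le_div_of_nonneg_left (norm_nonneg _) (hd z.1 z.2) h
    · exact hg0 z
  have hfs : ∀ s : ℂ, Summable (f s) := fun s => hsum.of_nonneg_of_le (hf0 s) (hfle s)
  -- choose a finite set T with small tail
  obtain ⟨T, hT⟩ : ∃ T : Finset Z, (∑' z : {x : Z // x ∉ T}, g z) < ε / 2 := by
    have h1 : Filter.Tendsto (fun T : Finset Z => ∑ z ∈ T, g z) Filter.atTop
        (nhds (∑' z : Z, g z)) := hsum.hasSum
    obtain ⟨T, hT⟩ := (h1.eventually_const_lt (show (∑' z : Z, g z) - ε / 2 < ∑' z : Z, g z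
      by linarith)).exists
    refine ⟨T, ?_⟩
    have := hsum.sum_add_tsum_subtype_compl T
    linarith
  set M : ℝ := ∑ z ∈ T, ‖z.1‖ with hM
  set C : ℝ := ∑ z ∈ T, ‖c z.1‖ with hC
  have hMz : ∀ z ∈ T, ‖z.1‖ ≤ M :=
    fun z hz => Finset.single_le_sum (f := fun z : Z => ‖z.1‖)
      (fun i _ => norm_nonneg _) hz
  have hC0 : 0 ≤ C := Finset.sum_nonneg fun i _ => norm_nonneg _
  refine ⟨M + 2 * C / ε + 1, fun s hs => ?_⟩
  have hsM : 2 * C / ε + 1 ≤ ‖s‖ - M := by linarith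
  have hsM0 : 0 < ‖s‖ - M := by
    have : 0 ≤ 2 * C / ε := by positivity
    linarith
  -- split the sum
  rw [show (∑' z : Z, if d z.1 ≤ ‖s - z.1‖ then ‖c z.1‖ / ‖s - z.1‖ else 0) = ∑' z : Z, f s z from rfl,
    ← (hfs s).sum_add_tsum_subtype_compl T]
  have htail : (∑' z : {x : Z // x ∉ T}, f s z) ≤ ∑' z : {x : Z // x ∉ T}, g z :=
    Summable.tsum_le_tsum (fun z => hfle s z.1) ((hfs s).subtype _) (hsum.subtype _)
  have hhead : (∑ z ∈ T, f s z) ≤ C / (‖s‖ - M) := by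
    rw [hC, Finset.sum_div]
    refine Finset.sum_le_sum fun z hz => ?_
    simp only [hfdef]
    split_ifs with h
    · apply div_le_div_of_nonneg_left (norm_nonneg _) hsM0
      have := norm_sub_norm_le s z.1
      have := hMz z hz
      linarith
    · positivity
  have hCsmall : C / (‖s‖ - M) < ε / 2 := by
    rw [div_lt_iff₀ hsM0]
    have : ε / 2 * (‖s‖ - M) ≥ ε / 2 * (2 * C / ε + 1) :=
      mul_le_mul_of_nonneg_left hsM (by linarith)
    have hceq : ε / 2 * (2 * C / ε + 1) = C + ε / 2 := by
      field_simp
    nlinarith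
  linarith
end

section
/- If t is real with |t| ≥ δ > 0, then 1/|sin(x + it)| = 2 e^{−|t|} (1 + e^{−2|t|} ε(x,t)) for some ε(x,t) satisfying −1 < ε(x,t) < 1 + 1/δ. -/
open Complex

set_option maxHeartbeats 1000000 in
theorem inv_abs_sin_asymptotic
    (δ : ℝ) (hδ : 0 < δ) (x t : ℝ) (ht : δ ≤ |t|) :
    ∃ ε : ℝ, -1 < ε ∧ ε < 1 + 1 / δ ∧
      1 / ‖Complex.sin (x + t * Complex.I)‖ =
        2 * Real.exp (-|t|) * (1 + Real.exp (-2 * |t|) * ε) := by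
  set A := ‖Complex.sin (x + t * Complex.I)‖ with hA
  have ht0 : 0 < |t| := lt_of_lt_of_le hδ ht
  set E := Real.exp |t| with hE
  have hE1 : 1 < E := by
    calc (1:ℝ) = Real.exp 0 := Real.exp_zero.symm
    _ < E := Real.exp_lt_exp.mpr ht0
  have hEpos : 0 < E := lt_trans one_pos hE1
  have hEne : E ≠ 0 := ne_of_gt hEpos
  have hinv1 : E⁻¹ < 1 := inv_lt_one_of_one_lt₀ hE1
  have hinvpos : 0 < E⁻¹ := by positivity
  have hEinv : E⁻¹ * E = 1 := inv_mul_cancel₀ hEne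
  -- compute sin (x + t I)
  have hz : Complex.sin (x + t * Complex.I) =
      (Real.sin x * Real.cosh t : ℝ) + (Real.cos x * Real.sinh t : ℝ) * Complex.I := by
    rw [Complex.sin_add, Complex.sin_mul_I, Complex.cos_mul_I]
    push_cast
    ring
  have hA2 : A ^ 2 = (Real.sin x * Real.cosh t) ^ 2 + (Real.cos x * Real.sinh t) ^ 2 := by
    rw [hA, hz, Complex.sq_norm, Complex.normSq_add_mul_I]
  have hsc : Real.sin x ^ 2 + Real.cos x ^ 2 = 1 := Real.sin_sq_add_cos_sq x
  have hch : Real.cosh t ^ 2 = Real.sinh t ^ 2 + 1 := Real.cosh_sq t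
  -- bounds on A^2
  have hlow2 : Real.sinh t ^ 2 ≤ A ^ 2 := by
    nlinarith [sq_nonneg (Real.sin x), sq_nonneg (Real.cos x)]
  have hup2 : A ^ 2 ≤ Real.cosh t ^ 2 := by
    nlinarith [sq_nonneg (Real.sin x), sq_nonneg (Real.cos x)]
  have hsinhabs : Real.sinh |t| = (E - E⁻¹) / 2 := by
    rw [Real.sinh_eq, hE, Real.exp_neg]
  have hcoshabs : Real.cosh |t| = (E + E⁻¹) / 2 := by
    rw [Real.cosh_eq, hE, Real.exp_neg]
  have hsinh2 : Real.sinh t ^ 2 = ((E - E⁻¹) / 2) ^ 2 := by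
    rcases abs_cases t with ⟨h, _⟩ | ⟨h, _⟩
    · rw [← hsinhabs, h]
    · rw [← hsinhabs, h, Real.sinh_neg]; ring
  have hcosh2 : Real.cosh t ^ 2 = ((E + E⁻¹) / 2) ^ 2 := by
    rcases abs_cases t with ⟨h, _⟩ | ⟨h, _⟩
    · rw [← hcoshabs, h]
    · rw [← hcoshabs, h, Real.cosh_neg]
  have hA0 : 0 ≤ A := norm_nonneg _
  have hlowE : (E - E⁻¹) / 2 ≤ A := by
    have h1 : 0 ≤ (E - E⁻¹) / 2 := by linarith
    nlinarith [hlow2, hsinh2]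
  have hupE : A ≤ (E + E⁻¹) / 2 := by
    have h1 : 0 < (E + E⁻¹) / 2 := by positivity
    nlinarith [hup2, hcosh2]
  clear_value A E
  have hApos : 0 < A := by linarith
  have hAne : A ≠ 0 := ne_of_gt hApos
  have h2A : 0 < 2 * A := by linarith
  clear hz hA2 hsc hch hlow2 hup2 hsinhabs hcoshabs hsinh2 hcosh2
  have hrepr : E ^ 2 * (E / (2 * A) - 1) = (E ^ 3 - E ^ 2 * (2 * A)) / (2 * A) := by
    field_simp
  refine ⟨E ^ 2 * (E / (2 * A) - 1), ?_, ?_, ?_⟩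
  · -- -1 < ε
    rw [hrepr, lt_div_iff₀ h2A]
    have h9 : (E ^ 2 - 1) * (2 * A) ≤ (E ^ 2 - 1) * (E + E⁻¹) := by
      apply mul_le_mul_of_nonneg_left (by linarith) (by nlinarith)
    have h10 : (E ^ 2 - 1) * (E + E⁻¹) = E ^ 3 - E⁻¹ := by
      field_simp
      ring
    have h12 : (E ^ 2 - 1) * (2 * A) = E ^ 2 * (2 * A) - 1 * (2 * A) := by ring
    linarith
  · -- ε < 1 + 1/δ
    have hEδ : Real.exp δ ≤ E := by rw [hE]; exact Real.exp_le_exp.mpr ht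
    have hE2δ : 1 + δ < E ^ 2 := by
      have h1 : 1 + 2 * δ < Real.exp (2 * δ) := by
        have := Real.add_one_lt_exp (show (2:ℝ) * δ ≠ 0 by positivity)
        linarith
      have h2 : Real.exp (2 * δ) = Real.exp δ * Real.exp δ := by
        rw [← Real.exp_add]; ring_nf
      have h3 : Real.exp δ * Real.exp δ ≤ E * E :=
        mul_le_mul hEδ hEδ (le_of_lt (Real.exp_pos δ)) (le_of_lt hEpos)
      nlinarith
    have h4 : (1 + δ) * E⁻¹ < E := by
      have h5 := mul_lt_mul_of_pos_right hE2δ hinvpos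
      have h6 : E ^ 2 * E⁻¹ = E := by field_simp
      linarith
    have hstep3 : E < (1 + 1 / δ) * (E - E⁻¹) := by
      have h6 : δ * E⁻¹ < E - E⁻¹ := by nlinarith
      have h7 := mul_lt_mul_of_pos_left h6 (show 0 < 1 / δ by positivity)
      have h8 : (1 / δ) * (δ * E⁻¹) = E⁻¹ := by field_simp
      nlinarith
    rw [hrepr, div_lt_iff₀ h2A]
    have hEA : E ^ 2 * (E - E⁻¹) ≤ E ^ 2 * (2 * A) := by
      apply mul_le_mul_of_nonneg_left (by linarith) (by positivity)
    have hid : E ^ 3 - E ^ 2 * (E - E⁻¹) = E := by field_simp; ring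
    have hR : (1 + 1 / δ) * (E - E⁻¹) ≤ (1 + 1 / δ) * (2 * A) := by
      apply mul_le_mul_of_nonneg_left (by linarith) (by positivity)
    linarith
  · -- the equation
    have h1 : Real.exp (-|t|) = E⁻¹ := by rw [hE, Real.exp_neg]
    have h2 : Real.exp (-2 * |t|) = (E * E)⁻¹ := by
      rw [hE, ← Real.exp_add, ← Real.exp_neg]
      congr 1
      ring
    rw [h1, h2]
    field_simp
    ring
end

section
/- Let h be analytic on an open set containing the closed disk {z : |z − z₀| ≤ ρ}, and let 0 < r < ρ. Define F_n(z) := (h(z) − Σ_{k=0}^{n−1} h^{(k)}(z₀)(z − z₀)^k / k!) / (z − z₀)^n for z ≠ z₀ and F_n(z₀) := h^{(n)}(z₀)/n!. Then for all z with |z − z₀| ≤ r, |F_n(z)| ≤ M/(ρ^{n−1}(ρ − r)), where M = max{|h(z)| : |z − z₀| = ρ}. -/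
open Metric

theorem taylor_remainder_bound
    (U : Set ℂ) (hU : IsOpen U) (z₀ : ℂ) (ρ r : ℝ)
    (hr : 0 < r) (hrρ : r < ρ)
    (hball : closedBall z₀ ρ ⊆ U)
    (h : ℂ → ℂ) (hh : DifferentiableOn ℂ h U)
    (n : ℕ) (hn : 1 ≤ n)
    (M : ℝ) (hM : M = sSup ((fun z => ‖h z‖) '' sphere z₀ ρ))
    (F : ℂ → ℂ)
    (hF : ∀ z ≠ z₀, F z =
      (h z - ∑ k ∈ Finset.range n, (iteratedDeriv k h z₀ / (k.factorial : ℂ)) * (z - z₀) ^ k)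
        / (z - z₀) ^ n)
    (hF0 : F z₀ = iteratedDeriv n h z₀ / (n.factorial : ℂ)) :
    ∀ z ∈ closedBall z₀ r, ‖F z‖ ≤ M / (ρ ^ (n - 1) * (ρ - r)) := by
  have hρ0 : (0:ℝ) < ρ := hr.trans hrρ
  have hcoe : ((ρ.toNNReal : NNReal) : ℝ) = ρ := Real.coe_toNNReal ρ hρ0.le
  have hd : DifferentiableOn ℂ h (closedBall z₀ (ρ.toNNReal : ℝ)) := by
    rw [hcoe]; exact hh.mono hball
  have H : HasFPowerSeriesOnBall h (cauchyPowerSeries h z₀ (ρ.toNNReal : ℝ)) z₀ ρ.toNNReal :=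
    hd.hasFPowerSeriesOnBall (by simpa using hρ0)
  rw [hcoe] at H
  set p := cauchyPowerSeries h z₀ ρ with hp
  -- properties of M
  have hsne : (sphere z₀ ρ).Nonempty := NormedSpace.sphere_nonempty.mpr hρ0.le
  have hcont : ContinuousOn h (closedBall z₀ ρ) := (hh.mono hball).continuousOn
  have hcomp : IsCompact ((fun z => ‖h z‖) '' sphere z₀ ρ) :=
    (isCompact_sphere z₀ ρ).image_of_continuousOn
      ((hcont.mono sphere_subset_closedBall).norm)
  have hMle : ∀ w ∈ sphere z₀ ρ, ‖h w‖ ≤ M := fun w hw =>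
    hM ▸ le_csSup hcomp.bddAbove ⟨w, hw, rfl⟩
  have hM0 : 0 ≤ M := le_trans (norm_nonneg _) (hMle _ hsne.choose_spec)
  -- coefficient bounds
  have hcirc : Continuous fun θ : ℝ => ‖h (circleMap z₀ ρ θ)‖ := by
    apply Continuous.norm
    exact hcont.comp_continuous (continuous_circleMap _ _)
      (fun θ => sphere_subset_closedBall (circleMap_mem_sphere z₀ hρ0.le θ))
  have hint : (∫ θ in (0:ℝ)..2*Real.pi, ‖h (circleMap z₀ ρ θ)‖) ≤ 2 * Real.pi * M := by
    have := intervalIntegral.integral_mono_on (μ := MeasureTheory.volume)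
      Real.two_pi_pos.le (hcirc.intervalIntegrable _ _)
      (intervalIntegrable_const (c := M))
      (fun θ _ => hMle _ (circleMap_mem_sphere z₀ hρ0.le θ))
    simpa [mul_comm] using this
  have hcoeff : ∀ k, ‖p.coeff k‖ ≤ M / ρ ^ k := by
    intro k
    have h1 : ‖p.coeff k‖ ≤ ‖p k‖ := by
      simpa using (p k).le_opNorm 1
    refine h1.trans ((norm_cauchyPowerSeries_le h z₀ ρ k).trans ?_)
    rw [abs_of_pos hρ0]
    have h2 : (2 * Real.pi)⁻¹ * (∫ θ in (0:ℝ)..2*Real.pi, ‖h (circleMap z₀ ρ θ)‖) ≤ M := by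
      rw [inv_mul_le_iff₀ Real.two_pi_pos]
      linarith [hint]
    calc (2 * Real.pi)⁻¹ * (∫ θ in (0:ℝ)..2*Real.pi, ‖h (circleMap z₀ ρ θ)‖) * ρ⁻¹ ^ k
        ≤ M * ρ⁻¹ ^ k := by
          apply mul_le_mul_of_nonneg_right h2 (by positivity)
      _ = M / ρ ^ k := by rw [inv_pow]; ring
  -- coefficients are the Taylor coefficients
  have hcoeff_eq : ∀ k, (iteratedDeriv k h z₀ / (k.factorial : ℂ)) = p.coeff k := by
    intro k
    have hq := H.factorial_smul (1:ℂ) k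
    have hfac : ((k.factorial : ℂ)) ≠ 0 := by exact_mod_cast k.factorial_ne_zero
    rw [iteratedDeriv_eq_iteratedFDeriv, ← hq, nsmul_eq_mul,
      mul_div_cancel_left₀ _ hfac]
    rfl
  -- main argument
  intro z hz
  have hzr : ‖z - z₀‖ ≤ r := by
    simpa [Complex.dist_eq] using (mem_closedBall.mp hz)
  have hzρ : ‖z - z₀‖ < ρ := lt_of_le_of_lt hzr hrρ
  have hmem : (z - z₀) ∈ EMetric.ball (0:ℂ) ρ.toNNReal := by
    change edist (z - z₀) 0 < _
    rw [edist_dist, dist_zero_right, ENNReal.ofReal_lt_iff_lt_toReal (norm_nonneg _) ENNReal.coe_ne_top,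
      ENNReal.coe_toReal, hcoe]
    exact hzρ
  have Hsum : HasSum (fun k => p.coeff k * (z - z₀) ^ k) (h z) := by
    have := H.hasSum hmem
    simp only [FormalMultilinearSeries.apply_eq_pow_smul_coeff, smul_eq_mul] at this
    simpa [mul_comm] using this
  have Htail : HasSum (fun k => p.coeff (k + n) * (z - z₀) ^ (k + n))
      (h z - ∑ k ∈ Finset.range n, p.coeff k * (z - z₀) ^ k) :=
    (hasSum_nat_add_iff' n).mpr Hsum
  have HF : HasSum (fun k => p.coeff (k + n) * (z - z₀) ^ k) (F z) := by
    by_cases hzz : z = z₀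
    · have hz0 : F z = p.coeff n := by rw [hzz, hF0, hcoeff_eq]
      rw [hz0]
      have h0 : (fun k => p.coeff (k + n) * (z - z₀) ^ k) 0 = p.coeff n := by simp
      rw [← h0]
      exact hasSum_single 0 (fun b hb => by simp [hzz, sub_self, zero_pow hb])
    · have hzne : (z - z₀) ^ n ≠ 0 := pow_ne_zero _ (sub_ne_zero.mpr hzz)
      have := Htail.div_const ((z - z₀) ^ n)
      have heq : ∀ k, p.coeff (k + n) * (z - z₀) ^ (k + n) / (z - z₀) ^ n
          = p.coeff (k + n) * (z - z₀) ^ k := by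
        intro k
        rw [pow_add]
        field_simp
      simp only [heq] at this
      convert this using 1
      swap
      rw [hF z hzz]
      have hsum_eq : ∑ k ∈ Finset.range n, iteratedDeriv k h z₀ / (k.factorial:ℂ) * (z - z₀) ^ k
          = ∑ k ∈ Finset.range n, p.coeff k * (z - z₀) ^ k :=
        Finset.sum_congr rfl (fun k _ => by rw [hcoeff_eq])
      rw [hsum_eq]
      rfl
  -- geometric bound
  have hx0 : (0:ℝ) ≤ r / ρ := by positivity
  have hx1 : r / ρ < 1 := (div_lt_one hρ0).mpr hrρ
  have Hgeom : HasSum (fun k : ℕ => (M / ρ ^ n) * (r / ρ) ^ k)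
      ((M / ρ ^ n) * (1 - r / ρ)⁻¹) :=
    (hasSum_geometric_of_lt_one hx0 hx1).mul_left _
  have hbound : ∀ k, ‖p.coeff (k + n) * (z - z₀) ^ k‖ ≤ (M / ρ ^ n) * (r / ρ) ^ k := by
    intro k
    rw [norm_mul, norm_pow]
    calc ‖p.coeff (k + n)‖ * ‖z - z₀‖ ^ k
        ≤ (M / ρ ^ (k + n)) * r ^ k := by
          apply mul_le_mul (hcoeff _) (pow_le_pow_left₀ (norm_nonneg _) hzr k)
            (by positivity) (by positivity)
      _ = (M / ρ ^ n) * (r / ρ) ^ k := by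
          rw [pow_add, div_pow]
          ring
  have := tsum_of_norm_bounded Hgeom hbound
  rw [HF.tsum_eq] at this
  refine this.trans (le_of_eq ?_)
  obtain ⟨m, rfl⟩ : ∃ m, n = m + 1 := ⟨n - 1, (Nat.succ_pred_eq_of_pos hn).symm⟩
  have hρr : ρ - r ≠ 0 := by linarith
  simp only [Nat.add_sub_cancel]
  rw [pow_succ]
  field_simp
end

section
/- Let K ≠ 0 be complex, (θ_k)_{k≥1} positive reals with Σ 1/θ_k² < ∞, and E(s) := K Π_{k≥1}(1 + (s/θ_k)²). Then for each fixed real t, the function v ↦ |E(√v + it)|^{−2} (i.e., |E(x+it)|^{−2} as a function of v = x²) is completely monotone on (0, ∞), provided E(x + it) ≠ 0 for all x > 0. -/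
open Finset Filter Real
open scoped Nat


noncomputable def Bchain (f : ℝ → ℝ) (T : ℕ → ℝ → ℝ) : ℕ → ℝ → ℝ
  | 0 => f
  | (j+1) => fun v => ∑ i ∈ Finset.range (j+1), (j.choose i : ℝ) * T i v * Bchain f T (j - i) v
  decreasing_by exact Nat.lt_succ_of_le (Nat.sub_le j i)

theorem Bchain_nonneg (f : ℝ → ℝ) (T : ℕ → ℝ → ℝ)
    (hf0 : ∀ v : ℝ, 0 < v → 0 ≤ f v)
    (hT0 : ∀ i, ∀ v : ℝ, 0 < v → 0 ≤ T i v) :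
    ∀ j, ∀ v : ℝ, 0 < v → 0 ≤ Bchain f T j v := by
  have hBsucc : ∀ m (w : ℝ), Bchain f T (m+1) w
      = ∑ i ∈ Finset.range (m+1), (m.choose i : ℝ) * T i w * Bchain f T (m - i) w :=
    fun m w => by rw [Bchain]
  have hB0f : Bchain f T 0 = f := by rw [Bchain]
  intro j
  induction j using Nat.strong_induction_on with
  | _ j IH =>
    match j with
    | 0 => intro v hv; rw [hB0f]; exact hf0 v hv
    | (j+1) =>
      intro v hv
      rw [hBsucc]
      apply Finset.sum_nonneg
      intro i hi
      exact mul_nonneg (mul_nonneg (Nat.cast_nonneg _) (hT0 i v hv))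
        (IH (j - i) (Nat.lt_succ_of_le (Nat.sub_le j i)) v hv)

theorem Bchain_hasDerivAt (f : ℝ → ℝ) (T : ℕ → ℝ → ℝ)
    (hf : ∀ v : ℝ, 0 < v → HasDerivAt f (-(T 0 v * f v)) v)
    (hT : ∀ i, ∀ v : ℝ, 0 < v → HasDerivAt (T i) (-T (i+1) v) v) :
    ∀ j, ∀ v : ℝ, 0 < v → HasDerivAt (Bchain f T j) (-Bchain f T (j+1) v) v := by
  have hBsucc : ∀ m (w : ℝ), Bchain f T (m+1) w
      = ∑ i ∈ Finset.range (m+1), (m.choose i : ℝ) * T i w * Bchain f T (m - i) w :=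
    fun m w => by rw [Bchain]
  have hB0f : Bchain f T 0 = f := by rw [Bchain]
  intro j
  induction j using Nat.strong_induction_on with
  | _ j IH =>
    match j with
    | 0 =>
      intro v hv
      have h := hf v hv
      have heq1 : -Bchain f T 1 v = -(T 0 v * f v) := by
        rw [hBsucc]
        simp [hB0f]
      rw [hB0f, heq1]
      exact h
    | (j+1) =>
      intro v hv
      have key : ∀ i ∈ Finset.range (j+1), HasDerivAt
          (fun w => (j.choose i : ℝ) * T i w * Bchain f T (j - i) w)
          ((j.choose i : ℝ) * (-T (i+1) v * Bchain f T (j-i) v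
            + T i v * -Bchain f T (j-i+1) v)) v := by
        intro i hi
        have hd : HasDerivAt (fun w => T i w * Bchain f T (j-i) w)
            (-T (i+1) v * Bchain f T (j-i) v + T i v * -Bchain f T (j-i+1) v) v :=
          (hT i v hv).mul (IH (j-i) (Nat.lt_succ_of_le (Nat.sub_le j i)) v hv)
        have := hd.const_mul ((j.choose i : ℝ))
        simpa [mul_assoc] using this
      have hsum := HasDerivAt.fun_sum key
      have heq : (∑ i ∈ Finset.range (j+1), (j.choose i : ℝ) *
            (-T (i+1) v * Bchain f T (j-i) v + T i v * -Bchain f T (j-i+1) v))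
          = -Bchain f T (j+2) v := by
        rw [show j + 2 = (j+1)+1 by rfl, hBsucc]
        set g : ℕ → ℝ := fun i => T i v * Bchain f T (j + 1 - i) v with hg
        have hgs : ∀ i ≤ j, T (i+1) v * Bchain f T (j-i) v = g (i+1) := by
          intro i hij
          simp only [hg]
          congr 2
          omega
        have lhs_eq : (∑ i ∈ Finset.range (j+1), (j.choose i : ℝ) *
              (-T (i+1) v * Bchain f T (j-i) v + T i v * -Bchain f T (j-i+1) v))
            = -((∑ i ∈ Finset.range (j+1), (j.choose i : ℝ) * g (i+1))
              + (∑ i ∈ Finset.range (j+1), (j.choose i : ℝ) * g i)) := by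
          rw [← Finset.sum_add_distrib, ← Finset.sum_neg_distrib]
          apply Finset.sum_congr rfl
          intro i hi
          rw [Finset.mem_range, Nat.lt_succ_iff] at hi
          rw [← hgs i hi]
          have : j - i + 1 = j + 1 - i := by omega
          rw [this]
          simp only [hg]
          ring
        rw [lhs_eq]
        congr 1
        -- now: ∑ range(j+2), C(j+1,i) * T i v * B(j+1-i) v
        --     = ∑ range(j+1), C(j,i) g(i+1) + ∑ range(j+1), C(j,i) g i
        have rhs_eq : (∑ i ∈ Finset.range (j+1+1), ((j+1).choose i : ℝ) * T i v * Bchain f T (j+1-i) v)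
            = ∑ i ∈ Finset.range (j+2), ((j+1).choose i : ℝ) * g i := by
          apply Finset.sum_congr rfl
          intro i hi
          simp only [hg]; ring
        rw [rhs_eq]
        rw [Finset.sum_range_succ' (fun i => ((j+1).choose i : ℝ) * g i) (j+1)]
        simp only [Nat.choose_succ_succ', Nat.choose_zero_right, Nat.cast_one, one_mul,
          Nat.cast_add]
        rw [show (∑ i ∈ Finset.range (j+1), (((j.choose i : ℝ)) + (j.choose (i+1) : ℝ)) * g (i+1))
            = (∑ i ∈ Finset.range (j+1), (j.choose i : ℝ) * g (i+1))
              + (∑ i ∈ Finset.range (j+1), (j.choose (i+1) : ℝ) * g (i+1)) by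
          rw [← Finset.sum_add_distrib]; apply Finset.sum_congr rfl; intro i hi; ring]
        have e2 : (∑ i ∈ Finset.range (j+1), (j.choose (i+1) : ℝ) * g (i+1)) + g 0
            = ∑ i ∈ Finset.range (j+1), (j.choose i : ℝ) * g i := by
          rw [Finset.sum_range_succ' (fun i => (j.choose i : ℝ) * g i) j]
          rw [Finset.sum_range_succ]
          simp [Nat.choose_succ_self]
        linarith [e2]
      rw [← heq]
      have hfun : Bchain f T (j+1) = fun w => ∑ i ∈ Finset.range (j+1),
          (j.choose i : ℝ) * T i w * Bchain f T (j - i) w := funext fun w => hBsucc j w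
      rw [hfun]
      exact hsum

theorem cm_engine (f : ℝ → ℝ) (T : ℕ → ℝ → ℝ)
    (hf0 : ∀ v : ℝ, 0 < v → 0 ≤ f v)
    (hf : ∀ v : ℝ, 0 < v → HasDerivAt f (-(T 0 v * f v)) v)
    (hT0 : ∀ i, ∀ v : ℝ, 0 < v → 0 ≤ T i v)
    (hT : ∀ i, ∀ v : ℝ, 0 < v → HasDerivAt (T i) (-T (i+1) v) v) :
    ∀ j, ∀ v : ℝ, 0 < v → 0 ≤ (-1:ℝ)^j * iteratedDeriv j f v := by
  have hB := Bchain_hasDerivAt f T hf hT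
  have hB0 := Bchain_nonneg f T hf0 hT0
  have key : ∀ j, ∀ v : ℝ, 0 < v → iteratedDeriv j f v = (-1:ℝ)^j * Bchain f T j v := by
    intro j
    induction j with
    | zero =>
      intro v hv
      rw [iteratedDeriv_zero, show Bchain f T 0 = f by rw [Bchain], pow_zero, one_mul]
    | succ j IH =>
      intro v hv
      rw [iteratedDeriv_succ]
      have hev : iteratedDeriv j f =ᶠ[nhds v] fun w => (-1:ℝ)^j * Bchain f T j w := by
        filter_upwards [IsOpen.mem_nhds isOpen_Ioi hv] with w hw
        exact IH w hw
      rw [hev.deriv_eq]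
      have : HasDerivAt (fun w => (-1:ℝ)^j * Bchain f T j w)
          ((-1:ℝ)^j * -Bchain f T (j+1) v) v := (hB j v hv).const_mul _
      rw [this.deriv]
      rw [pow_succ]
      ring
  intro j v hv
  rw [key j v hv, ← mul_assoc, ← pow_add]
  rw [Even.neg_one_pow ⟨j, by ring⟩, one_mul]
  exact hB0 j v hv



-- derivative of (w+a)^-(n+1)
lemma hasDerivAt_inv_pow_aux (n : ℕ) (a y : ℝ) (h : 0 < y + a) :
    HasDerivAt (fun w : ℝ => (((w + a) ^ (n+1))⁻¹))
      (-((n+1 : ℝ) * (((y + a) ^ (n+2))⁻¹))) y := by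
  have h1 : HasDerivAt (fun w : ℝ => w + a) 1 y := (hasDerivAt_id y).add_const a
  have h2 : HasDerivAt (fun x : ℝ => x ^ (-(n+1:ℤ)))
      ((((-(n+1:ℤ)) : ℤ) : ℝ) * (y+a) ^ ((-(n+1:ℤ))-1)) (y+a) :=
    hasDerivAt_zpow _ _ (Or.inl h.ne')
  have h3 := h2.comp y h1
  have hfun : ((fun x : ℝ => x ^ (-(n+1:ℤ))) ∘ (fun w : ℝ => w + a))
      = fun w : ℝ => (((w + a) ^ (n+1))⁻¹) := by
    funext w
    simp only [Function.comp_apply]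
    rw [show (-(n+1:ℤ)) = -((n+1 : ℕ) : ℤ) by push_cast; ring, zpow_neg, zpow_natCast]
  rw [hfun] at h3
  refine HasDerivAt.congr_deriv h3 ?_
  rw [show ((-(n+1:ℤ))-1) = -((n+2 : ℕ) : ℤ) by push_cast; ring, zpow_neg, zpow_natCast]
  push_cast
  ring

lemma summable_inv_add_sq (θ : ℕ → ℝ) (hθ : ∀ k, 0 < θ k)
    (hθsum : Summable fun k => 1 / (θ k) ^ 2) (c ε : ℝ) (hε : 0 < ε) :
    Summable fun k => (ε + (θ k + c) ^ 2)⁻¹ := by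
  have h0 : Filter.Tendsto (fun k => 1 / θ k ^ 2) atTop (nhds 0) := hθsum.tendsto_atTop_zero
  set M : ℝ := 2 * |c| + 1 with hM
  have hMpos : 0 < M := by positivity
  have hev : ∀ᶠ k in atTop, M ≤ θ k := by
    have : ∀ᶠ k in atTop, 1 / θ k ^ 2 < 1 / M ^ 2 := by
      apply h0.eventually (eventually_lt_nhds (by positivity))
    filter_upwards [this] with k hk
    have h1 : M ^ 2 < θ k ^ 2 := by
      have := (div_lt_div_iff₀ (pow_pos (hθ k) 2) (by positivity)).mp hk
      linarith
    nlinarith [hθ k]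
  apply Summable.of_norm_bounded_eventually_nat (g := fun k => 4 * (1 / θ k ^ 2))
    (hθsum.mul_left 4)
  filter_upwards [hev] with k hk
  have hθk := hθ k
  have habs : |c| ≤ θ k / 2 := by simp only [hM] at hk; linarith
  have h1 : θ k ^ 2 / 4 ≤ ε + (θ k + c) ^ 2 := by
    nlinarith [neg_abs_le c, le_abs_self c]
  have h2 : (0:ℝ) < θ k ^ 2 / 4 := by positivity
  rw [Real.norm_eq_abs, abs_of_nonneg (by positivity)]
  calc (ε + (θ k + c) ^ 2)⁻¹ ≤ (θ k ^ 2 / 4)⁻¹ := by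
        exact inv_anti₀ h2 h1
    _ = 4 * (1 / θ k ^ 2) := by field_simp

lemma abs_log_le_two_mul_abs_sub_one {x : ℝ} (h : |x - 1| ≤ 1/2) :
    |Real.log x| ≤ 2 * |x - 1| := by
  have hb := abs_le.mp h
  have hx : (0:ℝ) < x := by linarith [hb.1]
  have h1 := Real.log_le_sub_one_of_pos hx
  have h2 := Real.log_le_sub_one_of_pos (inv_pos.mpr hx)
  rw [Real.log_inv] at h2
  rw [abs_le]
  constructor
  · -- -(2|x-1|) ≤ log x, i.e. -log x ≤ 2 |x-1|
    have h3 : -Real.log x ≤ x⁻¹ - 1 := by linarith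
    have h4 : x⁻¹ - 1 ≤ 2 * |x - 1| := by
      rcases le_or_gt 1 x with hx1 | hx1
      · have : x⁻¹ ≤ 1 := by
          rw [inv_le_one_iff₀]; right; exact hx1
        have := abs_nonneg (x - 1)
        linarith
      · rw [abs_of_nonpos (by linarith : x - 1 ≤ 0)]
        have h5 : x⁻¹ ≤ 1 + 2*(1-x) := by
          rw [inv_le_iff_one_le_mul₀ hx]
          nlinarith
        linarith
    linarith
  · calc Real.log x ≤ x - 1 := h1
      _ ≤ |x - 1| := le_abs_self _
      _ ≤ 2 * |x - 1| := by linarith [abs_nonneg (x-1)]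

-- T derivative lemma
lemma T_hasDerivAt (a b : ℕ → ℝ) (ha : ∀ k, 0 ≤ a k) (hb : ∀ k, 0 ≤ b k)
    (hsum : ∀ ε : ℝ, 0 < ε → Summable fun k => (ε + a k)⁻¹ + (ε + b k)⁻¹)
    (i : ℕ) (v : ℝ) (hv : 0 < v) :
    HasDerivAt (fun w : ℝ => ∑' k, (i ! : ℝ) * (((w + a k) ^ (i+1))⁻¹ + ((w + b k) ^ (i+1))⁻¹))
      (-∑' k, (((i+1) ! : ℕ) : ℝ) * (((v + a k) ^ (i+2))⁻¹ + ((v + b k) ^ (i+2))⁻¹)) v := by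
  have hv2 : (0:ℝ) < v/2 := by linarith
  have key := hasDerivAt_tsum_of_isPreconnected
    (u := fun k => (((i+1) ! : ℕ) : ℝ) * ((2/v)^(i+1) * ((v/2 + a k)⁻¹ + (v/2 + b k)⁻¹)))
    (t := Set.Ioi (v/2)) (y₀ := v) (y := v)
    (g := fun k w => (i ! : ℝ) * (((w + a k) ^ (i+1))⁻¹ + ((w + b k) ^ (i+1))⁻¹))
    (g' := fun k w => -((((i+1) ! : ℕ) : ℝ) * (((w + a k) ^ (i+2))⁻¹ + ((w + b k) ^ (i+2))⁻¹)))
    (((hsum (v/2) hv2).mul_left ((2/v)^(i+1))).mul_left ((((i+1) ! : ℕ) : ℝ))) isOpen_Ioi (isPreconnected_Ioi)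
    ?_ ?_ (by simpa using hv2) ?_ (by simpa using hv2)
  · rw [tsum_neg] at key
    exact key
  · -- derivatives
    intro k y hy
    simp only [Set.mem_Ioi] at hy
    have hya : 0 < y + a k := by linarith [ha k]
    have hyb : 0 < y + b k := by linarith [hb k]
    have hda := hasDerivAt_inv_pow_aux i (a k) y hya
    have hdb := hasDerivAt_inv_pow_aux i (b k) y hyb
    have hmul := (hda.add hdb).const_mul ((i ! : ℝ))
    have : (i ! : ℝ) * (-((i+1 : ℝ) * (((y + a k) ^ (i+2))⁻¹))
          + -((i+1 : ℝ) * (((y + b k) ^ (i+2))⁻¹)))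
        = -((((i+1) ! : ℕ) : ℝ) * (((y + a k) ^ (i+2))⁻¹ + ((y + b k) ^ (i+2))⁻¹)) := by
      rw [Nat.factorial_succ]
      push_cast
      ring
    rw [this] at hmul
    exact hmul
  · -- bound
    intro k y hy
    simp only [Set.mem_Ioi] at hy
    have hgen : ∀ c : ℝ, 0 ≤ c → ((y + c) ^ (i+2))⁻¹ ≤ (2/v)^(i+1) * (v/2 + c)⁻¹ := by
      intro c hc
      have h1 : (0:ℝ) < v/2 + c := by linarith
      have h2 : (0:ℝ) < y + c := by linarith
      rw [show (2/v)^(i+1) * (v/2 + c)⁻¹ = ((v/2)^(i+1) * (v/2 + c))⁻¹ by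
        rw [mul_inv, ← inv_pow, inv_div]]
      apply inv_anti₀ (by positivity)
      calc (v/2)^(i+1) * (v/2 + c) ≤ (y + c)^(i+1) * (y + c) := by
            have hle : v/2 ≤ y + c := by linarith
            have hle2 : v/2 + c ≤ y + c := by linarith
            exact mul_le_mul (pow_le_pow_left₀ hv2.le hle _) hle2 h1.le
              (pow_nonneg h2.le _)
        _ = (y + c)^(i+2) := by rw [← pow_succ]
    have hya0 : 0 < y + a k := by linarith [ha k]
    have hyb0 : 0 < y + b k := by linarith [hb k]
    rw [norm_neg, Real.norm_eq_abs, abs_of_nonneg (mul_nonneg (Nat.cast_nonneg _)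
      (add_nonneg (inv_nonneg.mpr (pow_nonneg hya0.le _)) (inv_nonneg.mpr (pow_nonneg hyb0.le _))))]
    show (((i+1) ! : ℕ) : ℝ) * (((y + a k) ^ (i+2))⁻¹ + ((y + b k) ^ (i+2))⁻¹)
      ≤ (((i+1) ! : ℕ) : ℝ) * ((2/v)^(i+1) * ((v/2 + a k)⁻¹ + (v/2 + b k)⁻¹))
    apply mul_le_mul_of_nonneg_left _ (Nat.cast_nonneg _)
    rw [mul_add]
    exact add_le_add (hgen (a k) (ha k)) (hgen (b k) (hb k))
  · -- summability at base point
    have hgen2 : ∀ c : ℝ, 0 ≤ c → ((v + c) ^ (i+1))⁻¹ ≤ (1/v)^i * (v + c)⁻¹ := by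
      intro c hc
      have h1 : (0:ℝ) < v + c := by linarith
      rw [show (1/v)^i * (v + c)⁻¹ = (v^i * (v + c))⁻¹ by
        rw [mul_inv, ← inv_pow, one_div]]
      apply inv_anti₀ (by positivity)
      calc v^i * (v + c) ≤ (v + c)^i * (v + c) :=
            mul_le_mul (pow_le_pow_left₀ hv.le (by linarith) _) le_rfl h1.le
              (pow_nonneg h1.le _)
        _ = (v + c)^(i+1) := by rw [← pow_succ]
    refine Summable.of_nonneg_of_le
      (f := fun k => (i ! : ℝ) * ((1/v)^i * ((v + a k)⁻¹ + (v + b k)⁻¹)))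
      (fun k => ?_) (fun k => ?_) (((hsum v hv).mul_left ((1/v)^i)).mul_left ((i ! : ℝ)))
    · have hva : (0:ℝ) < v + a k := by linarith [ha k]
      have hvb : (0:ℝ) < v + b k := by linarith [hb k]
      exact mul_nonneg (Nat.cast_nonneg _)
        (add_nonneg (inv_nonneg.mpr (pow_nonneg hva.le _)) (inv_nonneg.mpr (pow_nonneg hvb.le _)))
    · show (i ! : ℝ) * (((v + a k) ^ (i+1))⁻¹ + ((v + b k) ^ (i+1))⁻¹)
        ≤ (i ! : ℝ) * ((1/v)^i * ((v + a k)⁻¹ + (v + b k)⁻¹))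
      apply mul_le_mul_of_nonneg_left _ (Nat.cast_nonneg _)
      rw [mul_add]
      exact add_le_add (hgen2 (a k) (ha k)) (hgen2 (b k) (hb k))

-- S derivative lemma
lemma S_hasDerivAt (a b : ℕ → ℝ) (d : ℕ → ℝ) (ha : ∀ k, 0 ≤ a k) (hb : ∀ k, 0 ≤ b k)
    (hd : ∀ k, 0 < d k)
    (hsum : ∀ ε : ℝ, 0 < ε → Summable fun k => (ε + a k)⁻¹ + (ε + b k)⁻¹)
    (v : ℝ) (hv : 0 < v)
    (hlog : Summable fun k => Real.log ((v + a k) * (v + b k) / d k)) :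
    HasDerivAt (fun w : ℝ => ∑' k, Real.log ((w + a k) * (w + b k) / d k))
      (∑' k, ((v + a k)⁻¹ + (v + b k)⁻¹)) v := by
  have hv2 : (0:ℝ) < v/2 := by linarith
  exact hasDerivAt_tsum_of_isPreconnected
    (u := fun k => (v/2 + a k)⁻¹ + (v/2 + b k)⁻¹)
    (t := Set.Ioi (v/2)) (y₀ := v) (y := v)
    (g := fun k w => Real.log ((w + a k) * (w + b k) / d k))
    (g' := fun k w => (w + a k)⁻¹ + (w + b k)⁻¹)
    (hsum (v/2) hv2) isOpen_Ioi isPreconnected_Ioi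
    (by
      intro k y hy
      simp only [Set.mem_Ioi] at hy
      have hya : 0 < y + a k := by linarith [ha k]
      have hyb : 0 < y + b k := by linarith [hb k]
      have hda : HasDerivAt (fun w : ℝ => Real.log (w + a k)) ((y + a k)⁻¹) y := by
        exact ((Real.hasDerivAt_log hya.ne').comp y ((hasDerivAt_id y).add_const (a k))).congr_deriv (mul_one _)
      have hdb : HasDerivAt (fun w : ℝ => Real.log (w + b k)) ((y + b k)⁻¹) y := by
        exact ((Real.hasDerivAt_log hyb.ne').comp y ((hasDerivAt_id y).add_const (b k))).congr_deriv (mul_one _)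
      have hlin : HasDerivAt (fun w : ℝ => Real.log (w + a k) + Real.log (w + b k)
          - Real.log (d k)) ((y + a k)⁻¹ + (y + b k)⁻¹) y := (hda.add hdb).sub_const _
      apply hlin.congr_of_eventuallyEq
      filter_upwards [IsOpen.mem_nhds isOpen_Ioi hy] with w hw
      simp only [Set.mem_Ioi] at hw
      have hwa : 0 < w + a k := by linarith [ha k]
      have hwb : 0 < w + b k := by linarith [hb k]
      rw [Real.log_div (by positivity) (hd k).ne', Real.log_mul hwa.ne' hwb.ne'])
    (by
      intro k y hy
      simp only [Set.mem_Ioi] at hy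
      have hya2 : (0:ℝ) < v/2 + a k := by linarith [ha k]
      have hyb2 : (0:ℝ) < v/2 + b k := by linarith [hb k]
      have hya : 0 < y + a k := by linarith [ha k]
      have hyb : 0 < y + b k := by linarith [hb k]
      rw [Real.norm_eq_abs, abs_of_nonneg (add_nonneg (inv_nonneg.mpr hya.le) (inv_nonneg.mpr hyb.le))]
      exact add_le_add (inv_anti₀ hya2 (by linarith)) (inv_anti₀ hyb2 (by linarith)))
    (by simpa using hv2) hlog (by simpa using hv2)



lemma hasProd_exp_of_hasSum {f : ℕ → ℝ} {a : ℝ} (h : HasSum f a) :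
    HasProd (fun n => Real.exp (f n)) (Real.exp a) := by
  have key := (Real.continuous_exp.tendsto a).comp h
  have : (Real.exp ∘ fun s : Finset ℕ => ∑ i ∈ s, f i)
      = fun s : Finset ℕ => ∏ i ∈ s, Real.exp (f i) := by
    funext s
    simp only [Function.comp_apply]
    exact Real.exp_sum s f
  rwa [HasProd, ← this]

lemma normSq_factor (θ x t : ℝ) (hθ : 0 < θ) :
    Complex.normSq (1 + ((x + t*Complex.I)/θ)^2)
      = (x^2 + (θ - t)^2) * (x^2 + (θ + t)^2) / θ^4 := by
  have hθC : (θ:ℂ) ≠ 0 := Complex.ofReal_ne_zero.mpr hθ.ne'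
  have h1 : (1 : ℂ) + (((x:ℂ) + (t:ℂ)*Complex.I)/(θ:ℂ))^2
      = ((↑(θ^2 + x^2 - t^2) + ↑(2*x*t)*Complex.I)) / (↑(θ^2)) := by
    have hI : Complex.I^2 = -1 := Complex.I_sq
    field_simp
    push_cast
    ring_nf
    rw [hI]
    ring
  rw [h1, map_div₀, Complex.normSq_add_mul_I, Complex.normSq_ofReal]
  rw [div_eq_div_iff (by positivity) (by positivity)]
  ring

lemma summable_log_p (θ : ℕ → ℝ) (hθ : ∀ k, 0 < θ k)
    (hθsum : Summable fun k => 1 / (θ k) ^ 2) (t v : ℝ) (hv : 0 < v) :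
    Summable fun k => Real.log ((v + (θ k - t)^2) * (v + (θ k + t)^2) / θ k ^ 4) := by
  set δ : ℝ := v + t^2 with hδ
  have hδpos : 0 < δ := by have := sq_nonneg t; simp only [hδ]; nlinarith
  have h0 : Tendsto (fun k => 1 / θ k ^ 2) atTop (nhds 0) := hθsum.tendsto_atTop_zero
  apply Summable.of_norm_bounded_eventually_nat
    (g := fun k => 2*(δ^2+2*δ) * (1/θ k ^2)) ((hθsum.mul_left _))
  have hev1 : ∀ᶠ k in atTop, 1 ≤ θ k := by
    have : ∀ᶠ k in atTop, 1 / θ k ^ 2 < 1 / 2 ^ 2 := by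
      apply h0.eventually (eventually_lt_nhds (by norm_num))
    filter_upwards [this] with k hk
    have h1 : (2:ℝ) ^ 2 < θ k ^ 2 := by
      have := (div_lt_div_iff₀ (pow_pos (hθ k) 2) (by norm_num : (0:ℝ) < 2^2)).mp hk
      linarith
    nlinarith [hθ k]
  have hev2 : ∀ᶠ k in atTop, (δ^2+2*δ) * (1/θ k ^ 2) ≤ 1/2 := by
    have htend : Tendsto (fun k => (δ^2+2*δ) * (1/θ k ^ 2)) atTop (nhds 0) := by
      simpa using h0.const_mul (δ^2+2*δ)
    apply htend.eventually (eventually_le_nhds (by norm_num))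
  filter_upwards [hev1, hev2] with k h1 h2
  have hθk := hθ k
  have hθ4 : (0:ℝ) < θ k ^ 4 := by positivity
  set q : ℝ := (v + (θ k - t)^2) * (v + (θ k + t)^2) / θ k ^ 4 with hq
  have key : q - 1 = ((v + t^2)^2 + 2*(θ k)^2*(v - t^2)) / θ k ^ 4 := by
    simp only [hq]
    field_simp
    ring
  have h3 : |v - t^2| ≤ δ := by
    rw [abs_le]
    constructor
    · simp only [hδ]; nlinarith [sq_nonneg t]
    · simp only [hδ]; nlinarith [sq_nonneg t]
  have hq1 : |q - 1| ≤ (δ^2+2*δ) * (1/θ k ^ 2) := by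
    rw [key, abs_div, abs_of_pos hθ4]
    have habs : |(v + t^2)^2 + 2*(θ k)^2*(v - t^2)| ≤ δ^2 + 2*(θ k)^2*δ := by
      calc |(v + t^2)^2 + 2*(θ k)^2*(v - t^2)|
          ≤ |(v + t^2)^2| + |2*(θ k)^2*(v - t^2)| := abs_add_le _ _
        _ = δ^2 + 2*(θ k)^2*|v - t^2| := by
            rw [abs_of_nonneg (sq_nonneg _), abs_mul, abs_of_nonneg (by positivity : (0:ℝ) ≤ 2*(θ k)^2)]
        _ ≤ δ^2 + 2*(θ k)^2*δ := by nlinarith [sq_nonneg (θ k)]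
    calc |(v + t^2)^2 + 2*(θ k)^2*(v - t^2)| / θ k ^ 4
        ≤ (δ^2 + 2*(θ k)^2*δ) / θ k ^ 4 := by gcongr
      _ ≤ (δ^2+2*δ) * (1/θ k ^ 2) := by
          rw [mul_one_div, div_le_div_iff₀ hθ4 (by positivity)]
          have h4 : 1 ≤ θ k ^ 2 := by nlinarith
          nlinarith [mul_nonneg (mul_nonneg (sq_nonneg δ) (sq_nonneg (θ k))) (sub_nonneg.mpr h4)]
  have hq2 : |q - 1| ≤ 1/2 := hq1.trans h2
  have hlog := abs_log_le_two_mul_abs_sub_one hq2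
  rw [Real.norm_eq_abs]
  calc |Real.log q| ≤ 2 * |q - 1| := hlog
    _ ≤ 2 * ((δ^2+2*δ) * (1/θ k ^ 2)) := by linarith
    _ = 2*(δ^2+2*δ) * (1/θ k ^ 2) := by ring


open Complex

theorem E_inv_sq_completely_monotone
    (K : ℂ) (hK : K ≠ 0) (θ : ℕ → ℝ) (hθ : ∀ k, 0 < θ k)
    (hθsum : Summable fun k => 1 / (θ k) ^ 2)
    (E : ℂ → ℂ)
    (hE : ∀ s : ℂ, HasProd (fun k : ℕ => 1 + (s / (θ k : ℂ)) ^ 2) (E s / K))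
    (t : ℝ) (hne : ∀ x : ℝ, 0 < x → E (↑x + ↑t * Complex.I) ≠ 0) :
    ∀ j : ℕ, ∀ v : ℝ, 0 < v →
      0 ≤ (-1 : ℝ) ^ j *
        iteratedDeriv j
          (fun v : ℝ => (‖E (↑(Real.sqrt v) + ↑t * Complex.I)‖ ^ 2)⁻¹) v := by
  set a : ℕ → ℝ := fun k => (θ k - t)^2 with ha_def
  set b : ℕ → ℝ := fun k => (θ k + t)^2 with hb_def
  have ha : ∀ k, 0 ≤ a k := fun k => sq_nonneg _
  have hb : ∀ k, 0 ≤ b k := fun k => sq_nonneg _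
  have hsumab : ∀ ε : ℝ, 0 < ε → Summable fun k => (ε + a k)⁻¹ + (ε + b k)⁻¹ := by
    intro ε hε
    apply Summable.add
    · have := summable_inv_add_sq θ hθ hθsum (-t) ε hε
      simpa [ha_def, sub_eq_add_neg] using this
    · exact summable_inv_add_sq θ hθ hθsum t ε hε
  set T : ℕ → ℝ → ℝ :=
    fun i w => ∑' k, (i ! : ℝ) * (((w + a k) ^ (i+1))⁻¹ + ((w + b k) ^ (i+1))⁻¹) with hT_def
  set S : ℝ → ℝ := fun w => ∑' k, Real.log ((w + a k) * (w + b k) / θ k ^ 4) with hS_def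
  set f : ℝ → ℝ := fun v => (‖E (↑(Real.sqrt v) + ↑t * Complex.I)‖ ^ 2)⁻¹ with hf_def
  have hK2 : 0 < Complex.normSq K := Complex.normSq_pos.mpr hK
  have hcont : Continuous (⇑Complex.normSq) := by
    have h1 : Continuous (fun z : ℂ => ‖z‖ ^ 2) := continuous_norm.pow 2
    exact h1.congr fun z => (Complex.normSq_eq_norm_sq z).symm
  have hlogsum : ∀ v : ℝ, 0 < v →
      Summable fun k => Real.log ((v + a k) * (v + b k) / θ k ^ 4) := by
    intro v hv
    simpa [ha_def, hb_def] using summable_log_p θ hθ hθsum t v hv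
  have hEeq : ∀ v : ℝ, 0 < v →
      Complex.normSq (E (↑(Real.sqrt v) + ↑t * Complex.I))
        = Complex.normSq K * Real.exp (S v) := by
    intro v hv
    have hx2 : Real.sqrt v ^ 2 = v := Real.sq_sqrt hv.le
    have hprod1 : HasProd (fun k => (v + a k) * (v + b k) / θ k ^ 4)
        (Complex.normSq (E (↑(Real.sqrt v) + ↑t * Complex.I)) / Complex.normSq K) := by
      have hmap := (hE (↑(Real.sqrt v) + ↑t * Complex.I)).map Complex.normSq hcont
      rw [map_div₀] at hmap
      have heq : (⇑Complex.normSq ∘ fun k : ℕ =>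
            1 + ((↑(Real.sqrt v) + ↑t * Complex.I) / (θ k : ℂ)) ^ 2)
          = fun k => (v + a k) * (v + b k) / θ k ^ 4 := by
        funext k
        simp only [Function.comp_apply]
        rw [normSq_factor (θ k) (Real.sqrt v) t (hθ k), hx2]
      rwa [heq] at hmap
    have hprod2 : HasProd (fun k => (v + a k) * (v + b k) / θ k ^ 4) (Real.exp (S v)) := by
      have h2 := hasProd_exp_of_hasSum (hlogsum v hv).hasSum
      have heq : (fun k => Real.exp (Real.log ((v + a k) * (v + b k) / θ k ^ 4)))
          = fun k => (v + a k) * (v + b k) / θ k ^ 4 := by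
        funext k
        have h1 : (0:ℝ) < v + a k := by have := ha k; linarith
        have h2 : (0:ℝ) < v + b k := by have := hb k; linarith
        have h3 : (0:ℝ) < θ k ^ 4 := by have := hθ k; positivity
        exact Real.exp_log (by positivity)
      rwa [heq] at h2
    have huniq := hprod1.unique hprod2
    rw [div_eq_iff hK2.ne'] at huniq
    rw [huniq]
    ring
  have hfeq : ∀ v : ℝ, 0 < v → f v = (Complex.normSq K)⁻¹ * Real.exp (-(S v)) := by
    intro v hv
    simp only [hf_def]
    rw [Complex.sq_norm, hEeq v hv, mul_inv, Real.exp_neg]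
  have hf0 : ∀ v : ℝ, 0 < v → 0 ≤ f v := by
    intro v hv
    simp only [hf_def]
    positivity
  have hT0 : ∀ i, ∀ v : ℝ, 0 < v → 0 ≤ T i v := by
    intro i v hv
    simp only [hT_def]
    apply tsum_nonneg
    intro k
    have h1 : (0:ℝ) < v + a k := by have := ha k; linarith
    have h2 : (0:ℝ) < v + b k := by have := hb k; linarith
    positivity
  have hTd : ∀ i, ∀ v : ℝ, 0 < v → HasDerivAt (T i) (-T (i+1) v) v := by
    intro i v hv
    simp only [hT_def]
    exact T_hasDerivAt a b ha hb hsumab i v hv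
  have hSd : ∀ v : ℝ, 0 < v → HasDerivAt S (T 0 v) v := by
    intro v hv
    have h := S_hasDerivAt a b (fun k => θ k ^ 4) ha hb
      (fun k => by have := hθ k; positivity) hsumab v hv (hlogsum v hv)
    have heq : T 0 v = ∑' k, ((v + a k)⁻¹ + (v + b k)⁻¹) := by
      simp only [hT_def]
      congr 1
      funext k
      simp [Nat.factorial]
    rw [heq]
    exact h
  have hfd : ∀ v : ℝ, 0 < v → HasDerivAt f (-(T 0 v * f v)) v := by
    intro v hv
    have h1 : HasDerivAt (fun w => -(S w)) (-(T 0 v)) v := (hSd v hv).neg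
    have h2 : HasDerivAt (fun w => Real.exp (-(S w)))
        (Real.exp (-(S v)) * -(T 0 v)) v := h1.exp
    have h3 := h2.const_mul ((Complex.normSq K)⁻¹)
    have h4 : HasDerivAt (fun w => (Complex.normSq K)⁻¹ * Real.exp (-(S w)))
        (-(T 0 v * ((Complex.normSq K)⁻¹ * Real.exp (-(S v))))) v := by
      refine HasDerivAt.congr_deriv h3 ?_
      ring
    have h5 : f =ᶠ[nhds v] fun w => (Complex.normSq K)⁻¹ * Real.exp (-(S w)) := by
      filter_upwards [IsOpen.mem_nhds isOpen_Ioi hv] with w hw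
      exact hfeq w hw
    have h6 := h4.congr_of_eventuallyEq h5
    rwa [← hfeq v hv] at h6
  exact cm_engine f T hf0 hfd hT0 hTd
end

section
/- Suppose 0 < r < ρ, B is analytic on the closed disk |s − z| ≤ ρ with B(z) = 0, B'(z) ≠ 0, and B(s) ≠ 0 for s ≠ z in that disk; suppose A is analytic and nonvanishing on the closed disk |s − z| ≤ ρ' with r < ρ'. Then for |s − z| ≤ r with s ≠ z: |1/(A(s)B(s)) − 1/(A(z)B'(z)(s−z))| ≤ |B'(z)|^{−1} · ( M(B,z,ρ)/(ρ(ρ−r)|A(s)·B(s)/(s−z)|) + M(1/A,z,ρ')/(ρ'−r) ), where M(h,z,ρ) := max{|h(w)| : |w − z| = ρ}. -/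
open Metric Complex

lemma dslope_norm_bound (f : ℂ → ℂ) (z s : ℂ) (R r C : ℝ)
    (hr : 0 ≤ r) (hrR : r < R)
    (U : Set ℂ) (hU : IsOpen U) (hsub : closedBall z R ⊆ U)
    (hf : DifferentiableOn ℂ f U)
    (hC : ∀ w ∈ sphere z R, ‖f w‖ ≤ C)
    (hs : s ∈ closedBall z r) (hsz : s ≠ z) :
    ‖dslope f z s‖ ≤ C / (R - r) := by
  have hR : (0:ℝ) < R := lt_of_le_of_lt hr hrR
  have hzU : z ∈ U := hsub (mem_closedBall_self hR.le)
  set g := dslope f z with hg_def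
  have hg : DifferentiableOn ℂ g U :=
    (Complex.differentiableOn_dslope (hU.mem_nhds hzU)).mpr hf
  have hgc : DiffContOnCl ℂ g (ball z R) := by
    apply DifferentiableOn.diffContOnCl
    rw [closure_ball z hR.ne']
    exact hg.mono hsub
  have hsR : s ∈ ball z R := mem_ball.mpr (lt_of_le_of_lt (mem_closedBall.mp hs) hrR)
  have hzR : z ∈ ball z R := mem_ball_self hR
  have key : (∮ w in C(z, R), (w - s)⁻¹ • g w) = (2 * Real.pi * I) • g s :=
    hgc.circleIntegral_sub_inv_smul hsR
  -- facts about points on the sphere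
  have sphere_ne : ∀ w ∈ sphere z R, w ≠ z ∧ w ≠ s := by
    intro w hw
    have hwz : ‖w - z‖ = R := by simpa [dist_eq_norm] using hw
    have hszr : ‖s - z‖ ≤ r := by simpa [dist_eq_norm] using mem_closedBall.mp hs
    constructor
    · intro h; rw [h] at hwz; simp at hwz; linarith
    · intro h; rw [h] at hwz
      have h0 : (0:ℝ) ≤ r := hr
      linarith
  have hws_lb : ∀ w ∈ sphere z R, R - r ≤ ‖w - s‖ := by
    intro w hw
    have hwz : ‖w - z‖ = R := by simpa [dist_eq_norm] using hw
    have hsz' : ‖s - z‖ ≤ r := by simpa [dist_eq_norm] using mem_closedBall.mp hs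
    have := norm_sub_norm_le (w - z) (s - z)
    have h2 : w - z - (s - z) = w - s := by ring
    rw [h2, hwz] at this
    linarith
  -- integrand congruence
  have congr1 : Set.EqOn (fun w => (w - s)⁻¹ • g w)
      (fun w => (w - s)⁻¹ * (w - z)⁻¹ * f w - f z • ((w - s)⁻¹ * (w - z)⁻¹))
      (sphere z R) := by
    intro w hw
    obtain ⟨hwz, hws⟩ := sphere_ne w hw
    simp only [hg_def, dslope_of_ne f hwz, slope_def_field, div_eq_mul_inv]
    simp only [smul_eq_mul]
    ring
  have contf : ContinuousOn f (sphere z R) :=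
    hf.continuousOn.mono (fun w hw => hsub (sphere_subset_closedBall hw))
  have cont1 : ContinuousOn (fun w : ℂ => (w - s)⁻¹ * (w - z)⁻¹ * f w) (sphere z R) := by
    apply ContinuousOn.mul _ contf
    apply ContinuousOn.mul
    · exact ((continuousOn_id.sub continuousOn_const).inv₀
        (fun w hw => sub_ne_zero.mpr (sphere_ne w hw).2))
    · exact ((continuousOn_id.sub continuousOn_const).inv₀
        (fun w hw => sub_ne_zero.mpr (sphere_ne w hw).1))
  have cont2 : ContinuousOn (fun w : ℂ => (w - s)⁻¹ * (w - z)⁻¹) (sphere z R) := by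
    apply ContinuousOn.mul
    · exact ((continuousOn_id.sub continuousOn_const).inv₀
        (fun w hw => sub_ne_zero.mpr (sphere_ne w hw).2))
    · exact ((continuousOn_id.sub continuousOn_const).inv₀
        (fun w hw => sub_ne_zero.mpr (sphere_ne w hw).1))
  have int1 : CircleIntegrable (fun w : ℂ => (w - s)⁻¹ * (w - z)⁻¹ * f w) z R :=
    cont1.circleIntegrable hR.le
  have int2 : CircleIntegrable (fun w : ℂ => f z • ((w - s)⁻¹ * (w - z)⁻¹)) z R :=
    (cont2.const_smul (f z)).circleIntegrable hR.le
  -- the second integral vanishes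
  have Izero : (∮ w in C(z, R), (w - s)⁻¹ * (w - z)⁻¹) = 0 := by
    have congr2 : Set.EqOn (fun w : ℂ => (w - s)⁻¹ * (w - z)⁻¹)
        (fun w : ℂ => (s - z)⁻¹ • ((w - s)⁻¹ - (w - z)⁻¹)) (sphere z R) := by
      intro w hw
      obtain ⟨hwz, hws⟩ := sphere_ne w hw
      have h1 : w - s ≠ 0 := sub_ne_zero.mpr hws
      have h2 : w - z ≠ 0 := sub_ne_zero.mpr hwz
      have h3 : s - z ≠ 0 := sub_ne_zero.mpr hsz
      simp only [smul_eq_mul]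
      field_simp
      ring
    rw [circleIntegral.integral_congr hR.le congr2]
    rw [circleIntegral.integral_smul]
    have ia : CircleIntegrable (fun w : ℂ => (w - s)⁻¹) z R := by
      rw [circleIntegrable_sub_inv_iff]
      right; intro h; rw [abs_of_pos hR] at h; exact (sphere_ne s h).2 rfl
    have ib : CircleIntegrable (fun w : ℂ => (w - z)⁻¹) z R := by
      rw [circleIntegrable_sub_inv_iff]
      right; intro h; rw [abs_of_pos hR] at h; exact (sphere_ne z h).1 rfl
    rw [circleIntegral.integral_sub ia ib,
      circleIntegral.integral_sub_inv_of_mem_ball hsR,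
      circleIntegral.integral_sub_inv_of_mem_ball hzR]
    simp
  have key2 : (2 * Real.pi * I) • g s = ∮ w in C(z, R), (w - s)⁻¹ * (w - z)⁻¹ * f w := by
    rw [← key, circleIntegral.integral_congr hR.le congr1,
      circleIntegral.integral_sub int1 int2, circleIntegral.integral_smul, Izero]
    simp
  have hCnn : 0 ≤ C := by
    have : z + R ∈ sphere z R := by simp [hR.le]
    exact le_trans (norm_nonneg _) (hC _ this)
  have hRr : (0:ℝ) < R - r := by linarith
  have bound : ‖∮ w in C(z, R), (w - s)⁻¹ * (w - z)⁻¹ * f w‖ ≤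
      2 * Real.pi * R * (C / ((R - r) * R)) := by
    apply circleIntegral.norm_integral_le_of_norm_le_const hR.le
    intro w hw
    obtain ⟨hwz, hws⟩ := sphere_ne w hw
    have hwzn : ‖w - z‖ = R := by simpa [dist_eq_norm] using hw
    have h1 : ‖(w - s)⁻¹‖ ≤ (R - r)⁻¹ := by
      rw [norm_inv]
      exact inv_anti₀ hRr (hws_lb w hw)
    have h2 : ‖(w - z)⁻¹‖ = R⁻¹ := by rw [norm_inv, hwzn]
    calc ‖(w - s)⁻¹ * (w - z)⁻¹ * f w‖ = ‖(w - s)⁻¹‖ * ‖(w - z)⁻¹‖ * ‖f w‖ := by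
          simp [norm_mul]
      _ ≤ (R - r)⁻¹ * R⁻¹ * C :=
          mul_le_mul (mul_le_mul h1 h2.le (norm_nonneg _) (by positivity))
            (hC w hw) (norm_nonneg _) (by positivity)
      _ = C / ((R - r) * R) := by rw [div_eq_mul_inv, mul_inv, mul_comm]
  rw [← key2] at bound
  have hnorm : ‖(2 * Real.pi * I : ℂ) • g s‖ = 2 * Real.pi * ‖g s‖ := by
    rw [norm_smul]
    have : ‖(2 * (Real.pi:ℂ) * I)‖ = 2 * Real.pi := by
      simp [norm_mul, _root_.abs_of_nonneg Real.pi_pos.le]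
    rw [this]
  rw [hnorm] at bound
  have hpi : (0:ℝ) < 2 * Real.pi := by positivity
  have : 2 * Real.pi * R * (C / ((R - r) * R)) = 2 * Real.pi * (C / (R - r)) := by
    field_simp
  rw [this] at bound
  exact le_of_mul_le_mul_left bound hpi

lemma ident_aux (a b c d u : ℂ) (ha : a ≠ 0) (hb : b ≠ 0) (hc : c ≠ 0) (hd : d ≠ 0)
    (hu : u ≠ 0) :
    1/(a*(b*u)) - 1/(c*d*u) = u⁻¹ * (d⁻¹ * ((d-b)/(a*b) + (a⁻¹ - c⁻¹))) := by
  rw [inv_sub_inv ha hc, div_add_div _ _ (mul_ne_zero ha hb) (mul_ne_zero ha hc),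
    div_sub_div _ _ (by simp [ha, hb, hu]) (by simp [hc, hd, hu]),
    inv_mul_eq_div, inv_mul_eq_div, div_div, div_div,
    div_eq_div_iff (by simp [ha, hb, hc, hd, hu]) (by simp [ha, hb, hc, hd, hu])]
  ring

set_option maxHeartbeats 1000000 in
theorem delta_bound
    (A B : ℂ → ℂ) (z : ℂ) (r ρ ρ' : ℝ)
    (hr : 0 < r) (hrρ : r < ρ) (hrρ' : r < ρ')
    (UB : Set ℂ) (hUB : IsOpen UB) (hUBsub : closedBall z ρ ⊆ UB)
    (hB : DifferentiableOn ℂ B UB)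
    (UA : Set ℂ) (hUA : IsOpen UA) (hUAsub : closedBall z ρ' ⊆ UA)
    (hA : DifferentiableOn ℂ A UA)
    (hAne : ∀ w ∈ closedBall z ρ', A w ≠ 0)
    (hBz : B z = 0) (hB' : deriv B z ≠ 0)
    (hBne : ∀ w ∈ closedBall z ρ, w ≠ z → B w ≠ 0)
    (MB MA : ℝ)
    (hMB : MB = sSup ((fun w => ‖B w‖) '' sphere z ρ))
    (hMA : MA = sSup ((fun w => ‖(A w)⁻¹‖) '' sphere z ρ')) :
    ∀ s ∈ closedBall z r, s ≠ z →
      ‖1 / (A s * B s) - 1 / (A z * deriv B z * (s - z))‖ ≤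
        ‖deriv B z‖⁻¹ *
          (MB / (ρ * (ρ - r) * ‖A s * (B s / (s - z))‖) + MA / (ρ' - r)) := by
  intro s hs hsz
  have hρ : (0:ℝ) < ρ := hr.trans hrρ
  have hρ' : (0:ℝ) < ρ' := hr.trans hrρ'
  have hsρ' : s ∈ closedBall z ρ' := closedBall_subset_closedBall hrρ'.le hs
  have hsρ : s ∈ closedBall z ρ := closedBall_subset_closedBall hrρ.le hs
  have hzρ' : z ∈ closedBall z ρ' := mem_closedBall_self hρ'.le
  have hzρ : z ∈ closedBall z ρ := mem_closedBall_self hρ.le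
  have hAs : A s ≠ 0 := hAne s hsρ'
  have hAz : A z ≠ 0 := hAne z hzρ'
  have hBs : B s ≠ 0 := hBne s hsρ hsz
  have hszne : s - z ≠ 0 := sub_ne_zero.mpr hsz
  set g := dslope B z with hgdef
  have hgz : g z = deriv B z := dslope_same B z
  have hgs : g s = B s / (s - z) := by
    rw [hgdef, dslope_of_ne B hsz, slope_def_field, hBz, sub_zero]
  have hgs0 : g s ≠ 0 := by rw [hgs]; exact div_ne_zero hBs hszne
  -- A part
  set UA' : Set ℂ := UA ∩ A ⁻¹' {(0:ℂ)}ᶜ with hUA'def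
  have hUA'open : IsOpen UA' := hA.continuousOn.isOpen_inter_preimage hUA isOpen_compl_singleton
  have hsubA : closedBall z ρ' ⊆ UA' := fun w hw => ⟨hUAsub hw, hAne w hw⟩
  have hfA : DifferentiableOn ℂ (fun w => (A w)⁻¹) UA' :=
    (hA.mono Set.inter_subset_left).inv (fun w hw => hw.2)
  have hCA : ∀ w ∈ sphere z ρ', ‖(A w)⁻¹‖ ≤ MA := by
    intro w hw
    rw [hMA]
    refine le_csSup ?_ ⟨w, hw, rfl⟩
    apply IsCompact.bddAbove_image (isCompact_sphere z ρ')
    exact ((hA.continuousOn.mono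
        (fun w hw => hUAsub (sphere_subset_closedBall hw))).inv₀
        (fun w hw => hAne w (sphere_subset_closedBall hw))).norm
  have boundA : ‖dslope (fun w => (A w)⁻¹) z s‖ ≤ MA / (ρ' - r) :=
    dslope_norm_bound _ z s ρ' r MA hr.le hrρ' UA' hUA'open hsubA hfA hCA hs hsz
  have hYA : ‖(A s)⁻¹ - (A z)⁻¹‖ ≤ ‖s - z‖ * (MA / (ρ' - r)) := by
    have heq : (A s)⁻¹ - (A z)⁻¹ = (s - z) * dslope (fun w => (A w)⁻¹) z s := by
      rw [dslope_of_ne _ hsz, slope_def_field]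
      field_simp
    rw [heq, norm_mul]
    exact mul_le_mul_of_nonneg_left boundA (norm_nonneg _)
  -- B part
  have hgdiff : DifferentiableOn ℂ g UB :=
    (Complex.differentiableOn_dslope (hUB.mem_nhds (hUBsub hzρ))).mpr hB
  have hCB : ∀ w ∈ sphere z ρ, ‖g w‖ ≤ MB / ρ := by
    intro w hw
    have hwz : w ≠ z := by
      intro h
      have : ‖w - z‖ = ρ := by simpa [dist_eq_norm] using hw
      rw [h] at this; simp at this; linarith
    have hwzn : ‖w - z‖ = ρ := by simpa [dist_eq_norm] using hw
    have hgw : g w = B w / (w - z) := by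
      rw [hgdef, dslope_of_ne B hwz, slope_def_field, hBz, sub_zero]
    have hBw : ‖B w‖ ≤ MB := by
      rw [hMB]
      refine le_csSup ?_ ⟨w, hw, rfl⟩
      apply IsCompact.bddAbove_image (isCompact_sphere z ρ)
      exact (hB.continuousOn.mono
        (fun w hw => hUBsub (sphere_subset_closedBall hw))).norm
    rw [hgw, norm_div, hwzn]
    gcongr
  have boundB : ‖dslope g z s‖ ≤ (MB / ρ) / (ρ - r) :=
    dslope_norm_bound g z s ρ r (MB / ρ) hr.le hrρ UB hUB hUBsub hgdiff hCB hs hsz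
  have hXB : ‖deriv B z - g s‖ ≤ ‖s - z‖ * ((MB / ρ) / (ρ - r)) := by
    have heq : deriv B z - g s = -((s - z) * dslope g z s) := by
      rw [dslope_of_ne _ hsz, slope_def_field, hgz]
      field_simp
      ring
    rw [heq, norm_neg, norm_mul]
    exact mul_le_mul_of_nonneg_left boundB (norm_nonneg _)
  -- key identity
  have hBseq : B s = g s * (s - z) := by rw [hgs]; field_simp
  have ident : 1 / (A s * B s) - 1 / (A z * deriv B z * (s - z)) =
      (s - z)⁻¹ * ((deriv B z)⁻¹ *
        ((deriv B z - g s) / (A s * g s) + ((A s)⁻¹ - (A z)⁻¹))) := by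
    rw [hBseq, ← mul_assoc, mul_assoc (A s)]
    exact ident_aux (A s) (g s) (A z) (deriv B z) (s - z) hAs hgs0 hAz hB' hszne
  have hAgs : (0:ℝ) < ‖A s * g s‖ := norm_pos_iff.mpr (mul_ne_zero hAs hgs0)
  have hsznorm : (0:ℝ) < ‖s - z‖ := norm_pos_iff.mpr hszne
  have htgt : ‖A s * (B s / (s - z))‖ = ‖A s * g s‖ := by rw [hgs]
  rw [htgt]
  calc ‖1 / (A s * B s) - 1 / (A z * deriv B z * (s - z))‖
      = ‖s - z‖⁻¹ * (‖deriv B z‖⁻¹ *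
          ‖(deriv B z - g s) / (A s * g s) + ((A s)⁻¹ - (A z)⁻¹)‖) := by
        rw [ident, norm_mul, norm_mul, norm_inv, norm_inv]
    _ ≤ ‖s - z‖⁻¹ * (‖deriv B z‖⁻¹ *
          (‖(deriv B z - g s) / (A s * g s)‖ + ‖(A s)⁻¹ - (A z)⁻¹‖)) := by
        gcongr
        exact norm_add_le _ _
    _ ≤ ‖s - z‖⁻¹ * (‖deriv B z‖⁻¹ *
          (‖s - z‖ * ((MB / ρ) / (ρ - r)) / ‖A s * g s‖ + ‖s - z‖ * (MA / (ρ' - r)))) := by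
        gcongr
        rw [norm_div]
        gcongr
    _ = ‖deriv B z‖⁻¹ * (MB / (ρ * (ρ - r) * ‖A s * g s‖) + MA / (ρ' - r)) := by
        have h1 : ‖s - z‖ ≠ 0 := ne_of_gt hsznorm
        have h2 : (ρ - r) ≠ 0 := by linarith
        have h3 : (ρ' - r) ≠ 0 := by linarith
        have h4 : ‖A s * g s‖ ≠ 0 := ne_of_gt hAgs
        have h5 : (ρ:ℝ) ≠ 0 := ne_of_gt hρ
        have key3 : ∀ (c k X Y N : ℝ), c ≠ 0 → N ≠ 0 →
            c⁻¹ * (k * (c * X / N + c * Y)) = k * (X / N + Y) := by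
          intro c k X Y N hc hN
          field_simp
        rw [key3 _ _ _ _ _ h1 h4, div_div, div_div, mul_assoc]
end

section
/- Define m(r, δ) := sup{ 1/(2|ξ(1/2 + s)|) : Re(s) ≥ r, |Im(s)| ≤ δ } where ξ is the Riemann xi function. Then m(r, δ) → 0 as r → ∞, for each fixed δ ≥ 0; indeed for r > σ₀ − 1/2 (with σ₀ the root of ζ(σ)=2 on (1,∞)), m(r, δ) ≤ (2 − ζ(1/2 + r))^{−1} · (inf{|a(1/2+s)| : Re(s) ≥ r, |Im(s)| ≤ δ})^{−1}. -/
open Complex Filter Topology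

noncomputable def zetaReal (σ : ℝ) : ℝ := ∑' n : ℕ, 1 / ((n : ℝ) + 1) ^ σ

noncomputable def aFun (s : ℂ) : ℂ :=
  (Real.pi : ℂ) ^ (-s / 2) * 2 * Complex.Gamma (1 + s / 2) * (s - 1)

noncomputable def xi (s : ℂ) : ℂ := (1 / 2) * aFun s * riemannZeta s

noncomputable def mBound (r δ : ℝ) : ℝ :=
  sSup {y : ℝ | ∃ s : ℂ, r ≤ s.re ∧ |s.im| ≤ δ ∧ y = 1 / (2 * ‖xi (1 / 2 + s)‖)}



lemma summable_aux {σ : ℝ} (h : 1 < σ) : Summable (fun n : ℕ => 1 / ((n:ℝ)+1)^σ) := by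
  have h1 := Real.summable_one_div_nat_rpow.mpr h
  have h2 := (summable_nat_add_iff 1).mpr h1
  simpa using h2

lemma summable_aux2 {σ : ℝ} (h : 1 < σ) : Summable (fun n : ℕ => 1 / ((n:ℝ)+2)^σ) := by
  have h2 := (summable_nat_add_iff 1).mpr (summable_aux h)
  simpa [add_assoc, show (1:ℝ)+1 = 2 by norm_num] using h2

lemma zetaReal_eq {σ : ℝ} (h : 1 < σ) :
    zetaReal σ = 1 + ∑' n : ℕ, 1 / ((n:ℝ)+2)^σ := by
  rw [zetaReal, Summable.tsum_eq_zero_add (summable_aux h)]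
  norm_num
  congr 1
  ext n
  ring_nf

lemma zetaReal_anti {σ σ' : ℝ} (h : 1 < σ) (hle : σ ≤ σ') : zetaReal σ' ≤ zetaReal σ := by
  apply Summable.tsum_le_tsum _ (summable_aux (lt_of_lt_of_le h hle)) (summable_aux h)
  intro n
  apply one_div_le_one_div_of_le
  · positivity
  · exact Real.rpow_le_rpow_of_exponent_le (by exact_mod_cast le_add_of_nonneg_left n.cast_nonneg) hle

lemma zetaReal_lt {σ σ' : ℝ} (h : 1 < σ) (hlt : σ < σ') : zetaReal σ' < zetaReal σ := by
  apply Summable.tsum_lt_tsum_of_nonneg (i := 1)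
  · intro b; positivity
  · intro b
    apply one_div_le_one_div_of_le
    · positivity
    · exact Real.rpow_le_rpow_of_exponent_le (by exact_mod_cast le_add_of_nonneg_left b.cast_nonneg) hlt.le
  · have h2 : ((1:ℕ):ℝ) + 1 = 2 := by norm_num
    rw [h2]
    apply one_div_lt_one_div_of_lt
    · positivity
    · exact Real.rpow_lt_rpow_of_exponent_lt one_lt_two hlt
  · exact summable_aux h

lemma zetaReal_le_32 {σ : ℝ} (h : 4 ≤ σ) : zetaReal σ ≤ 3/2 := by
  have h1 : (1:ℝ) < σ := by linarith
  rw [zetaReal_eq h1]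
  have key : ∑' n : ℕ, 1 / ((n:ℝ)+2)^σ ≤ 1/4 := by
    apply Real.tsum_le_of_sum_range_le (fun n => by positivity)
    intro N
    have hterm : ∀ i : ℕ, 1 / ((i:ℝ)+2)^σ ≤
        (1/4) * (1/((i:ℝ)+1) - 1/(((i+1:ℕ):ℝ)+1)) := by
      intro i
      have hi1 : ((i:ℝ)+1) ≠ 0 := by positivity
      have hi2 : ((i:ℝ)+2) ≠ 0 := by positivity
      have e1 : 1/((i:ℝ)+1) - 1/(((i+1:ℕ):ℝ)+1) = 1/(((i:ℝ)+1)*((i:ℝ)+2)) := by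
        push_cast
        rw [show ((i:ℝ) + 1 + 1) = (i:ℝ) + 2 by ring, div_sub_div _ _ hi1 hi2]
        norm_num
      rw [e1, show (1:ℝ)/4 * (1/(((i:ℝ)+1)*((i:ℝ)+2))) = 1/(4*(((i:ℝ)+1)*((i:ℝ)+2))) by rw [div_mul_div_comm]; norm_num]
      apply one_div_le_one_div_of_le
      · positivity
      · have h4 : ((i:ℝ)+2)^(4:ℕ) ≤ ((i:ℝ)+2)^σ := by
          rw [← Real.rpow_natCast ((i:ℝ)+2) 4]
          exact Real.rpow_le_rpow_of_exponent_le (by push_cast; linarith [i.cast_nonneg (α := ℝ)]) (by norm_num [h])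
        have h5 : 4*(((i:ℝ)+1)*((i:ℝ)+2)) ≤ ((i:ℝ)+2)^(4:ℕ) := by
          nlinarith [i.cast_nonneg (α := ℝ), sq_nonneg ((i:ℝ))]
        linarith
    calc ∑ i ∈ Finset.range N, 1 / ((i:ℝ)+2)^σ
        ≤ ∑ i ∈ Finset.range N, (1/4) * (1/((i:ℝ)+1) - 1/(((i+1:ℕ):ℝ)+1)) :=
          Finset.sum_le_sum (fun i _ => hterm i)
      _ = (1/4) * (1/(((0:ℕ):ℝ)+1) - 1/(((N:ℕ):ℝ)+1)) := by
          rw [← Finset.mul_sum, Finset.sum_range_sub' (fun i => 1/((i:ℝ)+1)) N]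
      _ ≤ 1/4 := by
          have hN : (0:ℝ) ≤ 1/((N:ℝ)+1) := by positivity
          norm_num
          nlinarith
  linarith

lemma norm_term (u : ℂ) (x : ℝ) (hx : 0 < x) : ‖1 / (x:ℂ) ^ u‖ = 1 / x ^ u.re := by
  rw [norm_div, norm_one, Complex.norm_cpow_eq_rpow_re_of_pos hx]

lemma zeta_lb {u : ℂ} (h : 1 < u.re) : 2 - zetaReal u.re ≤ ‖riemannZeta u‖ := by
  have hnorm : ∀ n : ℕ, ‖1 / ((n:ℂ)+1) ^ u‖ = 1 / ((n:ℝ)+1) ^ u.re := by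
    intro n
    have hcast : ((n:ℂ)+1) = (((n:ℝ)+1 : ℝ) : ℂ) := by push_cast; ring
    rw [hcast, norm_term u _ (by positivity)]
  have hs : Summable (fun n : ℕ => 1 / ((n:ℂ)+1) ^ u) := by
    apply Summable.of_norm
    simpa only [hnorm] using summable_aux h
  have heq : riemannZeta u - 1 = ∑' n : ℕ, 1 / (((n+1:ℕ):ℂ)+1) ^ u := by
    rw [zeta_eq_tsum_one_div_nat_add_one_cpow h, hs.tsum_eq_zero_add]
    simp
  have hnorm2 : ∀ n : ℕ, ‖1 / (((n+1:ℕ):ℂ)+1) ^ u‖ = 1 / ((n:ℝ)+2) ^ u.re := by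
    intro n
    have hcast : (((n+1:ℕ):ℂ)+1) = (((n:ℝ)+2 : ℝ) : ℂ) := by push_cast; ring
    rw [hcast, norm_term u _ (by positivity)]
  have hsn : Summable (fun n : ℕ => ‖1 / (((n+1:ℕ):ℂ)+1) ^ u‖) := by
    simpa only [hnorm2] using summable_aux2 h
  have hbound : ‖riemannZeta u - 1‖ ≤ zetaReal u.re - 1 := by
    rw [heq]
    calc ‖∑' n : ℕ, 1 / (((n+1:ℕ):ℂ)+1) ^ u‖ ≤ ∑' n : ℕ, ‖1 / (((n+1:ℕ):ℂ)+1) ^ u‖ :=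
          norm_tsum_le_tsum_norm hsn
      _ = ∑' n : ℕ, 1 / ((n:ℝ)+2) ^ u.re := by simp only [hnorm2]
      _ = zetaReal u.re - 1 := by rw [zetaReal_eq h]; ring
  have h3 := norm_sub_norm_le (1:ℂ) (riemannZeta u)
  rw [norm_one, norm_sub_rev] at h3
  linarith


lemma isCompact_box (a b c d : ℝ) : IsCompact (Set.Icc a b ×ℂ Set.Icc c d) := by
  have : Set.Icc a b ×ℂ Set.Icc c d
      = (fun p : ℝ × ℝ => (p.1 : ℂ) + p.2 * I) '' (Set.Icc a b ×ˢ Set.Icc c d) := by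
    ext z
    simp only [Complex.mem_reProdIm, Set.mem_image, Set.mem_prod, Prod.exists]
    constructor
    · rintro ⟨h1, h2⟩
      exact ⟨z.re, z.im, ⟨h1, h2⟩, z.re_add_im⟩
    · rintro ⟨x, y, ⟨h1, h2⟩, rfl⟩
      simpa using ⟨h1, h2⟩
  rw [this]
  exact (isCompact_Icc.prod isCompact_Icc).image (by continuity)

lemma gamma_lb (d : ℝ) (hd : 0 ≤ d) : ∃ c : ℝ, 0 < c ∧ ∀ z : ℂ, 3/2 ≤ z.re → |z.im| ≤ d →
    c * ((⌊z.re⌋₊ - 2).factorial : ℝ) ≤ ‖Complex.Gamma z‖ := by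
  set K : Set ℂ := Set.Icc (3/2 : ℝ) 3 ×ℂ Set.Icc (-d) d with hK
  have hKc : IsCompact K := isCompact_box _ _ _ _
  have hKne : K.Nonempty := by
    refine ⟨2, ?_⟩
    rw [Complex.mem_reProdIm]
    constructor
    · simp; norm_num
    · simp [hd]
  have hcont : ContinuousOn (fun z : ℂ => ‖(Complex.Gamma z)⁻¹‖)  K :=
    (Complex.differentiable_one_div_Gamma.continuous.norm).continuousOn
  obtain ⟨zM, hzMK, hzM'⟩ := hKc.exists_isMaxOn hKne hcont
  have hzM : ∀ w ∈ K, ‖(Complex.Gamma w)⁻¹‖ ≤ ‖(Complex.Gamma zM)⁻¹‖ := fun w hw => hzM' hw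
  set M : ℝ := ‖(Complex.Gamma zM)⁻¹‖ with hM
  have hM0 : 0 < M := by
    rw [hM]
    have : Complex.Gamma zM ≠ 0 := by
      apply Complex.Gamma_ne_zero_of_re_pos
      have := (Complex.mem_reProdIm.mp hzMK).1.1
      linarith
    rw [norm_pos_iff]
    exact inv_ne_zero this
  refine ⟨M⁻¹, inv_pos.mpr hM0, ?_⟩
  have base : ∀ z : ℂ, 3/2 ≤ z.re → z.re ≤ 3 → |z.im| ≤ d → M⁻¹ ≤ ‖Complex.Gamma z‖ := by
    intro z h1 h2 h3
    have hzK : z ∈ K := by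
      rw [Complex.mem_reProdIm]
      exact ⟨⟨h1, h2⟩, Set.mem_Icc.mpr (abs_le.mp h3)⟩
    have hne : Complex.Gamma z ≠ 0 := Complex.Gamma_ne_zero_of_re_pos (by linarith)
    have hle := hzM z hzK
    rw [norm_inv] at hle
    have h4 : 0 < ‖Complex.Gamma z‖ := norm_pos_iff.mpr hne
    have h6 : 1 ≤ M * ‖Complex.Gamma z‖ := by
      calc (1:ℝ) = ‖Complex.Gamma z‖⁻¹ * ‖Complex.Gamma z‖ := (inv_mul_cancel₀ h4.ne').symm
        _ ≤ M * ‖Complex.Gamma z‖ := mul_le_mul_of_nonneg_right hle h4.le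
    rw [inv_eq_one_div, div_le_iff₀ hM0]
    nlinarith
  have main : ∀ n : ℕ, ∀ z : ℂ, 3/2 ≤ z.re → z.re < 3 + n → |z.im| ≤ d →
      M⁻¹ * ((⌊z.re⌋₊ - 2).factorial : ℝ) ≤ ‖Complex.Gamma z‖ := by
    intro n
    induction n with
    | zero =>
      intro z h1 h2 h3
      have h2' : z.re < 3 := by simpa using h2
      have hfl : ⌊z.re⌋₊ - 2 = 0 := by
        have : ⌊z.re⌋₊ < 3 := (Nat.floor_lt (by linarith)).mpr (by norm_num [h2'])
        omega
      rw [hfl]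
      simpa using base z h1 h2'.le h3
    | succ n ih =>
      intro z h1 h2 h3
      rcases lt_or_ge z.re (3 + n) with hc | hc
      · exact ih z h1 hc h3
      · have hw1 : 3/2 ≤ (z-1).re := by
          rw [Complex.sub_re, Complex.one_re]
          have : (0:ℝ) ≤ n := n.cast_nonneg
          linarith
        have hw2 : (z-1).re < 3 + n := by
          rw [Complex.sub_re, Complex.one_re]
          push_cast at h2
          linarith
        have hw3 : |(z-1).im| ≤ d := by
          rw [Complex.sub_im, Complex.one_im]
          simpa using h3
        have hne : (z-1) ≠ 0 := by
          intro h0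
          have := congrArg Complex.re h0
          rw [Complex.sub_re, Complex.one_re, Complex.zero_re] at this
          linarith
        have hGam : Complex.Gamma z = (z-1) * Complex.Gamma (z-1) := by
          have h5 := Complex.Gamma_add_one (z-1) hne
          rw [sub_add_cancel] at h5
          exact h5
        have hIH := ih (z-1) hw1 hw2 hw3
        have hfloor : ⌊(z-1).re⌋₊ = ⌊z.re⌋₊ - 1 := by
          rw [Complex.sub_re, Complex.one_re, Nat.floor_sub_one]
        rw [hfloor] at hIH
        have hk3 : 3 ≤ ⌊z.re⌋₊ := Nat.le_floor (by push_cast; linarith)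
        have hfz : (⌊z.re⌋₊ : ℝ) ≤ z.re := Nat.floor_le (by linarith)
        have hnz : (z.re - 1 : ℝ) ≤ ‖z - 1‖ := by
          have h7 := Complex.re_le_norm (z-1)
          rw [Complex.sub_re, Complex.one_re] at h7
          exact h7
        rw [hGam, norm_mul]
        have hsub : (⌊z.re⌋₊ - 2) = (⌊z.re⌋₊ - 1 - 2) + 1 := by omega
        calc M⁻¹ * ((⌊z.re⌋₊ - 2).factorial : ℝ)
            = ((⌊z.re⌋₊ - 2 : ℕ) : ℝ) * (M⁻¹ * ((⌊z.re⌋₊ - 1 - 2).factorial : ℝ)) := by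
              rw [hsub, Nat.factorial_succ, ← hsub, Nat.cast_mul]
              ring
          _ ≤ ‖z-1‖ * ‖Complex.Gamma (z-1)‖ := by
              apply mul_le_mul _ hIH (by positivity) (norm_nonneg _)
              have hcast : ((⌊z.re⌋₊ - 2 : ℕ) : ℝ) = (⌊z.re⌋₊ : ℝ) - 2 := by
                push_cast [Nat.cast_sub (by omega : 2 ≤ ⌊z.re⌋₊)]
                ring
              rw [hcast]
              linarith
  intro z h1 h3
  exact main (⌊z.re⌋₊ + 1) z h1 (by
    have := Nat.lt_floor_add_one z.re
    push_cast
    linarith) h3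



lemma aFun_lb (δ : ℝ) (hδ : 0 ≤ δ) : ∃ c : ℝ, 0 < c ∧ ∀ s : ℂ, 1/2 ≤ s.re → |s.im| ≤ δ →
    c * (s.re - 1/2) * ((⌊5/4 + s.re/2⌋₊ - 2).factorial : ℝ) * Real.pi ^ (-(1/4:ℝ) - s.re/2)
      ≤ ‖aFun (1/2 + s)‖ := by
  obtain ⟨c₀, hc₀, hg⟩ := gamma_lb δ hδ
  refine ⟨2 * c₀, by positivity, ?_⟩
  intro s hs him
  set u : ℂ := 1/2 + s with hu
  have hzre : (1 + u/2).re = 5/4 + s.re/2 := by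
    simp [hu, Complex.add_re, Complex.div_re]
    ring
  have hzim : (1 + u/2).im = s.im/2 := by
    simp [hu, Complex.add_im, Complex.div_im]
  have e1 : ‖(Real.pi:ℂ) ^ (-u/2)‖ = Real.pi ^ (-(1/4:ℝ) - s.re/2) := by
    rw [Complex.norm_cpow_eq_rpow_re_of_pos Real.pi_pos]
    congr 1
    simp [hu, Complex.add_re, Complex.div_re, Complex.neg_re]
    ring
  have hnorm : ‖aFun u‖ = Real.pi ^ (-(1/4:ℝ) - s.re/2) * 2 * ‖Complex.Gamma (1+u/2)‖ * ‖u - 1‖ := by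
    rw [aFun, norm_mul, norm_mul, norm_mul, e1]
    norm_num
  have hG : c₀ * ((⌊5/4 + s.re/2⌋₊ - 2).factorial : ℝ) ≤ ‖Complex.Gamma (1+u/2)‖ := by
    have := hg (1+u/2) (by rw [hzre]; linarith) (by rw [hzim, abs_div]; norm_num; linarith [abs_nonneg s.im])
    rwa [hzre] at this
  have hN : s.re - 1/2 ≤ ‖u - 1‖ := by
    have h7 := Complex.re_le_norm (u-1)
    have : (u-1).re = s.re - 1/2 := by
      simp [hu, Complex.add_re, Complex.sub_re]
      ring
    rw [this] at h7
    exact h7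
  have hA : 0 ≤ s.re - 1/2 := by linarith
  rw [hnorm]
  have hP : (0:ℝ) < Real.pi ^ (-(1/4:ℝ) - s.re/2) := Real.rpow_pos_of_pos Real.pi_pos _
  calc 2 * c₀ * (s.re - 1/2) * ((⌊5/4 + s.re/2⌋₊ - 2).factorial : ℝ) * Real.pi ^ (-(1/4:ℝ) - s.re/2)
      = (Real.pi ^ (-(1/4:ℝ) - s.re/2) * 2) * ((c₀ * ((⌊5/4 + s.re/2⌋₊ - 2).factorial : ℝ)) * (s.re - 1/2)) := by ring
    _ ≤ (Real.pi ^ (-(1/4:ℝ) - s.re/2) * 2) * (‖Complex.Gamma (1+u/2)‖ * ‖u - 1‖) := by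
        apply mul_le_mul_of_nonneg_left _ (by positivity)
        exact mul_le_mul hG hN hA (le_trans (by positivity) hG)
    _ = Real.pi ^ (-(1/4:ℝ) - s.re/2) * 2 * ‖Complex.Gamma (1+u/2)‖ * ‖u - 1‖ := by ring


lemma fact_pi_lb : ∀ m : ℕ, Real.pi ^ m ≤ ((m - 2).factorial : ℝ) * Real.pi ^ 5 := by
  have hpi1 : (1:ℝ) ≤ Real.pi := by nlinarith [Real.pi_gt_three]
  have step : ∀ m : ℕ, 5 ≤ m → Real.pi ^ m ≤ ((m - 2).factorial : ℝ) * Real.pi ^ 5 := by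
    intro m hm
    induction m, hm using Nat.le_induction with
    | base =>
      have h6 : ((5 - 2 : ℕ).factorial : ℝ) = 6 := by norm_num [Nat.factorial]
      rw [h6]
      nlinarith [pow_pos Real.pi_pos 5]
    | succ n hn ih =>
      have h1 : (n + 1 - 2) = (n - 2) + 1 := by omega
      rw [pow_succ, h1, Nat.factorial_succ, Nat.cast_mul]
      have h2 : Real.pi ≤ ((n - 2 : ℕ) : ℝ) + 1 := by
        have : (3:ℕ) ≤ n - 2 := by omega
        have : (3:ℝ) ≤ ((n - 2 : ℕ) : ℝ) := by exact_mod_cast this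
        nlinarith [Real.pi_le_four]
      calc Real.pi ^ n * Real.pi ≤ (((n-2).factorial : ℝ) * Real.pi ^ 5) * (((n-2:ℕ):ℝ) + 1) := by
            apply mul_le_mul ih h2 (by positivity) (by positivity)
        _ = (((n-2:ℕ):ℝ) + 1) * ((n-2).factorial : ℝ) * Real.pi ^ 5 := by push_cast; ring
        _ = (((n-2)+1:ℕ):ℝ) * ((n-2).factorial : ℝ) * Real.pi ^ 5 := by push_cast; ring
  intro m
  rcases le_or_gt 5 m with h | h
  · exact step m h
  · calc Real.pi ^ m ≤ Real.pi ^ 5 := pow_le_pow_right₀ hpi1 (by omega)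
      _ ≤ ((m - 2).factorial : ℝ) * Real.pi ^ 5 := by
          apply le_mul_of_one_le_left (by positivity)
          exact_mod_cast Nat.one_le_iff_ne_zero.mpr (Nat.factorial_ne_zero _)

lemma H_mono {m m' : ℕ} (hm : 5 ≤ m) (hle : m ≤ m') :
    ((m-2).factorial : ℝ) / Real.pi ^ m ≤ ((m'-2).factorial : ℝ) / Real.pi ^ m' := by
  induction m', hle using Nat.le_induction with
  | base => exact le_rfl
  | succ n hn ih =>
    refine le_trans ih ?_
    rw [div_le_div_iff₀ (by positivity) (by positivity)]
    have h1 : (n + 1 - 2) = (n - 2) + 1 := by omega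
    rw [h1, Nat.factorial_succ, Nat.cast_mul, pow_succ]
    have h2 : Real.pi ≤ ((n - 2 : ℕ) : ℝ) + 1 := by
      have h3 : (3:ℕ) ≤ n - 2 := by omega
      have h4 : (3:ℝ) ≤ ((n - 2 : ℕ) : ℝ) := by exact_mod_cast h3
      nlinarith [Real.pi_le_four]
    have hf : (0:ℝ) < ((n-2).factorial : ℝ) := by exact_mod_cast (n-2).factorial_pos
    calc ((n-2).factorial : ℝ) * (Real.pi ^ n * Real.pi)
        = (((n-2).factorial : ℝ) * Real.pi) * Real.pi ^ n := by ring
      _ ≤ (((n-2).factorial : ℝ) * (((n-2:ℕ):ℝ) + 1)) * Real.pi ^ n := by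
          apply mul_le_mul_of_nonneg_right _ (by positivity)
          exact mul_le_mul_of_nonneg_left h2 hf.le
      _ = (((n-2:ℕ):ℝ) + 1) * ((n-2).factorial : ℝ) * Real.pi ^ n := by ring
      _ = (((n-2)+1:ℕ):ℝ) * ((n-2).factorial : ℝ) * Real.pi ^ n := by push_cast; ring

lemma FP_lb (x : ℝ) (hx : 0 ≤ x) :
    (Real.pi ^ (5:ℕ))⁻¹ ≤ ((⌊5/4 + x/2⌋₊ - 2).factorial : ℝ) * Real.pi ^ (-(1/4:ℝ) - x/2) := by
  set N := ⌊5/4 + x/2⌋₊ with hN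
  have hpi1 : (1:ℝ) < Real.pi := by nlinarith [Real.pi_gt_three]
  have h1 : Real.pi ^ (-(N:ℝ)) ≤ Real.pi ^ (-(1/4:ℝ) - x/2) := by
    apply (Real.rpow_le_rpow_left_iff hpi1).mpr
    have := Nat.sub_one_lt_floor (5/4 + x/2)
    rw [← hN] at this
    linarith
  have h2 : (Real.pi ^ (5:ℕ))⁻¹ ≤ ((N - 2).factorial : ℝ) * Real.pi ^ (-(N:ℝ)) := by
    rw [Real.rpow_neg Real.pi_pos.le, Real.rpow_natCast]
    rw [← div_eq_mul_inv, le_div_iff₀ (by positivity), inv_mul_eq_div, div_le_iff₀ (by positivity)]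
    exact fact_pi_lb N
  calc (Real.pi ^ (5:ℕ))⁻¹ ≤ ((N - 2).factorial : ℝ) * Real.pi ^ (-(N:ℝ)) := h2
    _ ≤ ((N - 2).factorial : ℝ) * Real.pi ^ (-(1/4:ℝ) - x/2) := by
        apply mul_le_mul_of_nonneg_left h1 (by positivity)

lemma xi_norm (s : ℂ) : ‖xi s‖ = 1/2 * ‖aFun s‖ * ‖riemannZeta s‖ := by
  rw [xi, norm_mul, norm_mul]
  norm_num

lemma re_aux (s : ℂ) : ((1:ℂ)/2 + s).re = 1/2 + s.re := by
  simp [Complex.add_re]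

theorem mBound_tendsto_zero (δ : ℝ) (hδ : 0 ≤ δ)
    (σ₀ : ℝ) (hσ₀ : 1 < σ₀ ∧ zetaReal σ₀ = 2) :
    Tendsto (fun r => mBound r δ) atTop (nhds 0) ∧
    ∀ r : ℝ, σ₀ - 1 / 2 < r →
      mBound r δ ≤ (2 - zetaReal (1 / 2 + r))⁻¹ *
        (sInf {y : ℝ | ∃ s : ℂ, r ≤ s.re ∧ |s.im| ≤ δ ∧ y = ‖aFun (1 / 2 + s)‖})⁻¹ := by
  obtain ⟨hσ1, hσ2⟩ := hσ₀
  obtain ⟨c, hc, hAF⟩ := aFun_lb δ hδ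
  constructor
  · -- tendsto part
    set g : ℝ → ℝ := fun r => (2/c) * (Real.pi ^ ⌊5/4 + r/2⌋₊ / ((⌊5/4 + r/2⌋₊ - 2).factorial : ℝ))
      with hg
    have hg0 : Tendsto g atTop (𝓝 0) := by
      have base := FloorSemiring.tendsto_pow_div_factorial_atTop (K := ℝ) Real.pi
      have comp : Tendsto (fun m : ℕ => Real.pi ^ (m - 2) / (((m - 2).factorial : ℕ) : ℝ))
          atTop (𝓝 0) := base.comp (Filter.tendsto_sub_atTop_nat 2)
      have h2 : Tendsto (fun m : ℕ => Real.pi ^ m / (((m-2).factorial : ℕ) : ℝ)) atTop (𝓝 0) := by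
        have hconst := comp.const_mul (Real.pi ^ 2)
        rw [mul_zero] at hconst
        apply hconst.congr'
        filter_upwards [eventually_ge_atTop 2] with m hm
        have : m - 2 + 2 = m := by omega
        rw [mul_div_assoc', ← pow_add, show 2 + (m-2) = m by omega]
      have hN : Tendsto (fun r : ℝ => ⌊5/4 + r/2⌋₊) atTop atTop := by
        apply tendsto_nat_floor_atTop.comp
        apply tendsto_atTop_add_const_left
        exact Tendsto.atTop_div_const (by norm_num) tendsto_id
      have := (h2.comp hN).const_mul (2/c)
      rw [mul_zero] at this
      exact this
    apply tendsto_of_tendsto_of_tendsto_of_le_of_le' tendsto_const_nhds hg0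
    · filter_upwards with r
      apply Real.sSup_nonneg
      rintro y ⟨s, _, _, rfl⟩
      positivity
    · filter_upwards [eventually_ge_atTop (8:ℝ)] with r hr
      have hQpos : (0:ℝ) < ((⌊5/4 + r/2⌋₊ - 2).factorial : ℝ) / Real.pi ^ ⌊5/4 + r/2⌋₊ := by
        positivity
      have hNr5 : 5 ≤ ⌊5/4 + r/2⌋₊ := Nat.le_floor (by push_cast; linarith)
      apply Real.sSup_le _ (by positivity)
      rintro y ⟨s, hs1, hs2, rfl⟩
      have hx8 : (8:ℝ) ≤ s.re := le_trans hr hs1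
      -- lower bound for aFun
      have ha := hAF s (by linarith) hs2
      have hNle : ⌊5/4 + r/2⌋₊ ≤ ⌊5/4 + s.re/2⌋₊ := Nat.floor_le_floor (by linarith)
      have hstep1 : ((⌊5/4 + r/2⌋₊ - 2).factorial : ℝ) / Real.pi ^ ⌊5/4 + r/2⌋₊ ≤
          ((⌊5/4 + s.re/2⌋₊ - 2).factorial : ℝ) * Real.pi ^ (-(1/4:ℝ) - s.re/2) := by
        calc ((⌊5/4 + r/2⌋₊ - 2).factorial : ℝ) / Real.pi ^ ⌊5/4 + r/2⌋₊
            ≤ ((⌊5/4 + s.re/2⌋₊ - 2).factorial : ℝ) / Real.pi ^ ⌊5/4 + s.re/2⌋₊ :=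
              H_mono hNr5 hNle
          _ ≤ ((⌊5/4 + s.re/2⌋₊ - 2).factorial : ℝ) * Real.pi ^ (-(1/4:ℝ) - s.re/2) := by
              rw [div_eq_mul_inv]
              apply mul_le_mul_of_nonneg_left _ (by positivity)
              rw [← Real.rpow_natCast Real.pi ⌊5/4 + s.re/2⌋₊, ← Real.rpow_neg Real.pi_pos.le]
              apply (Real.rpow_le_rpow_left_iff (by nlinarith [Real.pi_gt_three])).mpr
              have := Nat.sub_one_lt_floor (5/4 + s.re/2)
              linarith
      have haf : c * (((⌊5/4 + r/2⌋₊ - 2).factorial : ℝ) / Real.pi ^ ⌊5/4 + r/2⌋₊)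
          ≤ ‖aFun (1/2 + s)‖ := by
        calc c * (((⌊5/4 + r/2⌋₊ - 2).factorial : ℝ) / Real.pi ^ ⌊5/4 + r/2⌋₊)
            = c * 1 * (((⌊5/4 + r/2⌋₊ - 2).factorial : ℝ) / Real.pi ^ ⌊5/4 + r/2⌋₊) := by ring
          _ ≤ c * (s.re - 1/2) *
              (((⌊5/4 + s.re/2⌋₊ - 2).factorial : ℝ) * Real.pi ^ (-(1/4:ℝ) - s.re/2)) := by
              apply mul_le_mul _ hstep1 hQpos.le (mul_nonneg hc.le (by linarith))
              · apply mul_le_mul_of_nonneg_left (by linarith) hc.le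
          _ = c * (s.re - 1/2) * ((⌊5/4 + s.re/2⌋₊ - 2).factorial : ℝ)
              * Real.pi ^ (-(1/4:ℝ) - s.re/2) := by ring
          _ ≤ ‖aFun (1/2 + s)‖ := ha
      -- lower bound for zeta
      have hre : ((1:ℂ)/2 + s).re = 1/2 + s.re := re_aux s
      have hzeta : (1:ℝ)/2 ≤ ‖riemannZeta (1/2 + s)‖ := by
        have hz1 : (1:ℝ) < ((1:ℂ)/2 + s).re := by rw [hre]; linarith
        have := zeta_lb hz1
        have hz2 : zetaReal (((1:ℂ)/2 + s).re) ≤ 3/2 := by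
          apply zetaReal_le_32
          rw [hre]; linarith
        linarith
      -- conclude
      have hxin : ‖xi (1/2 + s)‖ = 1/2 * ‖aFun (1/2 + s)‖ * ‖riemannZeta (1/2 + s)‖ :=
        xi_norm _
      have hxipos : (c * (((⌊5/4 + r/2⌋₊ - 2).factorial : ℝ) / Real.pi ^ ⌊5/4 + r/2⌋₊)) * (1/4)
          ≤ ‖xi (1/2 + s)‖ := by
        rw [hxin]
        calc (c * (((⌊5/4 + r/2⌋₊ - 2).factorial : ℝ) / Real.pi ^ ⌊5/4 + r/2⌋₊)) * (1/4)
            = 1/2 * (c * (((⌊5/4 + r/2⌋₊ - 2).factorial : ℝ) / Real.pi ^ ⌊5/4 + r/2⌋₊)) * (1/2) := by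
              ring
          _ ≤ 1/2 * ‖aFun (1/2 + s)‖ * ‖riemannZeta (1/2 + s)‖ := by
              apply mul_le_mul _ hzeta (by norm_num) (by positivity)
              apply mul_le_mul_of_nonneg_left haf (by norm_num)
      have hb : (0:ℝ) < c * (((⌊5/4 + r/2⌋₊ - 2).factorial : ℝ) / Real.pi ^ ⌊5/4 + r/2⌋₊) * (1/4) := by
        positivity
      calc 1 / (2 * ‖xi (1/2 + s)‖)
          ≤ 1 / (2 * (c * (((⌊5/4 + r/2⌋₊ - 2).factorial : ℝ) / Real.pi ^ ⌊5/4 + r/2⌋₊) * (1/4))) := by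
            apply one_div_le_one_div_of_le (by positivity)
            linarith
        _ = g r := by
            rw [hg]
            field_simp
            ring
  · -- explicit bound part
    intro r hr
    have hr2 : 1 < 1/2 + r := by linarith
    have hZlt : zetaReal (1/2 + r) < 2 := by
      have := zetaReal_lt hσ1 (show σ₀ < 1/2 + r by linarith)
      rwa [hσ2] at this
    set A := {y : ℝ | ∃ s : ℂ, r ≤ s.re ∧ |s.im| ≤ δ ∧ y = ‖aFun (1 / 2 + s)‖} with hA
    have hAne : A.Nonempty := ⟨‖aFun (1/2 + (r:ℂ))‖, ⟨(r:ℂ), by simp, by simp [hδ], rfl⟩⟩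
    have hAbdd : BddBelow A := ⟨0, by rintro y ⟨s, _, _, rfl⟩; positivity⟩
    have hεA : c * (r - 1/2) * (Real.pi ^ (5:ℕ))⁻¹ ≤ sInf A := by
      apply le_csInf hAne
      rintro y ⟨s, hs1, hs2, rfl⟩
      have hs12 : 1/2 ≤ s.re := by linarith
      have ha := hAF s hs12 hs2
      have hfp := FP_lb s.re (by linarith)
      calc c * (r - 1/2) * (Real.pi ^ (5:ℕ))⁻¹
          ≤ c * (s.re - 1/2) *
            (((⌊5/4 + s.re/2⌋₊ - 2).factorial : ℝ) * Real.pi ^ (-(1/4:ℝ) - s.re/2)) := by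
            apply mul_le_mul _ hfp (by positivity) (mul_nonneg hc.le (by linarith))
            apply mul_le_mul_of_nonneg_left (by linarith) hc.le
        _ = c * (s.re - 1/2) * ((⌊5/4 + s.re/2⌋₊ - 2).factorial : ℝ)
            * Real.pi ^ (-(1/4:ℝ) - s.re/2) := by ring
        _ ≤ ‖aFun (1/2 + s)‖ := ha
    have hεpos : (0:ℝ) < c * (r - 1/2) * (Real.pi ^ (5:ℕ))⁻¹ := by
      have : (0:ℝ) < r - 1/2 := by linarith
      positivity
    have hInfpos : 0 < sInf A := lt_of_lt_of_le hεpos hεA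
    apply Real.sSup_le
    · rintro y ⟨s, hs1, hs2, rfl⟩
      have hre : ((1:ℂ)/2 + s).re = 1/2 + s.re := re_aux s
      have hz1 : (1:ℝ) < ((1:ℂ)/2 + s).re := by rw [hre]; linarith
      have hzl := zeta_lb hz1
      have hanti : zetaReal (((1:ℂ)/2 + s).re) ≤ zetaReal (1/2 + r) := by
        rw [hre]
        exact zetaReal_anti hr2 (by linarith)
      have hzeta : 2 - zetaReal (1/2 + r) ≤ ‖riemannZeta (1/2 + s)‖ := by linarith
      have hInfle : sInf A ≤ ‖aFun (1/2 + s)‖ := csInf_le hAbdd ⟨s, hs1, hs2, rfl⟩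
      have hxin : ‖xi (1/2 + s)‖ = 1/2 * ‖aFun (1/2 + s)‖ * ‖riemannZeta (1/2 + s)‖ :=
        xi_norm _
      have hkey : sInf A * (2 - zetaReal (1/2 + r)) ≤ 2 * ‖xi (1/2 + s)‖ := by
        rw [hxin]
        have : 2 * (1/2 * ‖aFun (1/2 + s)‖ * ‖riemannZeta (1/2 + s)‖)
            = ‖aFun (1/2 + s)‖ * ‖riemannZeta (1/2 + s)‖ := by ring
        rw [this]
        apply mul_le_mul hInfle hzeta (by linarith) (by positivity)
      have hpos2 : (0:ℝ) < sInf A * (2 - zetaReal (1/2 + r)) := by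
        apply mul_pos hInfpos
        linarith
      calc 1 / (2 * ‖xi (1/2 + s)‖) ≤ 1 / (sInf A * (2 - zetaReal (1/2 + r))) :=
            one_div_le_one_div_of_le hpos2 hkey
        _ = (2 - zetaReal (1/2 + r))⁻¹ * (sInf A)⁻¹ := by
            rw [one_div, mul_inv]
            ring
    · have h1 : (0:ℝ) ≤ (2 - zetaReal (1/2 + r))⁻¹ := by
        apply inv_nonneg.mpr
        linarith
      have h2 : (0:ℝ) ≤ (sInf A)⁻¹ := inv_nonneg.mpr hInfpos.le
      exact mul_nonneg h1 h2
end
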